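/- arXiv:1712.04381 — 5 statements merged into one kernel-verified Lean document; each statement's English description precedes it below -/
import Mathlib

section
/- Let P ⊆ ℝ^d be a full-dimensional polytope (compact, with nonempty interior) with 0 ∉ P. Then the function L_P(s) = #(sP ∩ ℤ^d) is not nondecreasing on [0, ∞): there exists s₀ > 0 and ε₀ > 0 such that L_P(s₀) > L_P(s₀ + ε) for all 0 < ε < ε₀. -/
open Pointwise

noncomputable def latticeCount {d : ℕ} (S : Set (Fin d → ℝ)) : ℕ :=
  Set.ncard {x : Fin d → ℤ | (fun i => (x i : ℝ)) ∈ S}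

/-- If a point is in `s • P` and `t • P` with `0 < s ≤ u ≤ t` and `P` convex,
then it is in `u • P`. -/
lemma mem_smul_of_between {d : ℕ} {P : Set (Fin d → ℝ)} (hc : Convex ℝ P)
    {v : Fin d → ℝ} {s u t : ℝ} (hs : 0 < s) (hsu : s ≤ u) (hut : u ≤ t)
    (hvs : v ∈ s • P) (hvt : v ∈ t • P) : v ∈ u • P := by
  have hu : 0 < u := lt_of_lt_of_le hs hsu
  have ht : 0 < t := lt_of_lt_of_le hu hut
  rcases eq_or_lt_of_le hsu with rfl | hsu'
  · exact hvs
  rcases eq_or_lt_of_le hut with rfl | hut'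
  · exact hvt
  rw [Set.mem_smul_set_iff_inv_smul_mem₀ (ne_of_gt hs)] at hvs
  rw [Set.mem_smul_set_iff_inv_smul_mem₀ (ne_of_gt ht)] at hvt
  rw [Set.mem_smul_set_iff_inv_smul_mem₀ (ne_of_gt hu)]
  have hts : t⁻¹ < s⁻¹ := by
    apply inv_strictAnti₀ hs (lt_trans hsu' hut')
  have htu : t⁻¹ ≤ u⁻¹ := by
    apply inv_anti₀ hu hut
  have hus : u⁻¹ ≤ s⁻¹ := by
    apply inv_anti₀ hs hsu
  have hd : 0 < s⁻¹ - t⁻¹ := sub_pos.mpr hts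
  set a : ℝ := (u⁻¹ - t⁻¹) / (s⁻¹ - t⁻¹) with ha
  have ha0 : 0 ≤ a := div_nonneg (sub_nonneg.mpr htu) hd.le
  have ha1 : a ≤ 1 := by
    rw [ha, div_le_one hd]
    linarith
  have hb0 : 0 ≤ 1 - a := by linarith
  have key : a * s⁻¹ + (1 - a) * t⁻¹ = u⁻¹ := by
    have h1 : a * (s⁻¹ - t⁻¹) = u⁻¹ - t⁻¹ := div_mul_cancel₀ _ hd.ne'
    linear_combination h1
  have hmem := hc hvs hvt ha0 hb0 (by ring)
  have heq : a • (s⁻¹ • v) + (1 - a) • (t⁻¹ • v) = u⁻¹ • v := by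
    rw [smul_smul, smul_smul, ← add_smul, key]
  rwa [heq] at hmem

theorem stmt3 {d : ℕ} (P : Set (Fin d → ℝ))
    (hpoly : ∃ V : Finset (Fin d → ℝ), P = convexHull ℝ (V : Set (Fin d → ℝ)))
    (hint : (interior P).Nonempty)
    (h0 : (0 : Fin d → ℝ) ∉ P) :
    ∃ s₀ : ℝ, 0 < s₀ ∧ ∃ ε₀ : ℝ, 0 < ε₀ ∧ ∀ ε : ℝ, 0 < ε → ε < ε₀ →
      latticeCount ((s₀ + ε) • P) < latticeCount (s₀ • P) := by
  classical
  obtain ⟨V, hPV⟩ := hpoly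
  have hPc : Convex ℝ P := hPV ▸ convex_convexHull ℝ _
  have hcomp : IsCompact P := hPV ▸ V.finite_toSet.isCompact_convexHull (𝕜 := ℝ)
  have hclosed : IsClosed P := hcomp.isClosed
  obtain ⟨c, hc⟩ := hint
  have hPne : P.Nonempty := ⟨c, interior_subset hc⟩
  -- distance from 0 to P
  set δ : ℝ := Metric.infDist 0 P with hδdef
  have hδ : 0 < δ := (hclosed.notMem_iff_infDist_pos hPne).1 h0
  -- bound on P
  obtain ⟨M₀, hM₀⟩ := hcomp.isBounded.exists_norm_le
  set M : ℝ := max M₀ 1 with hMdef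
  have hM1 : (1 : ℝ) ≤ M := le_max_right _ _
  have hMpos : (0 : ℝ) < M := lt_of_lt_of_le one_pos hM1
  have hM : ∀ p ∈ P, ‖p‖ ≤ M := fun p hp => (hM₀ p hp).trans (le_max_left _ _)
  -- upper norm bound in s • P
  have hub : ∀ (s : ℝ) (v : Fin d → ℝ), 0 ≤ s → v ∈ s • P → ‖v‖ ≤ s * M := by
    rintro s v hs ⟨p, hp, rfl⟩
    rw [norm_smul, Real.norm_eq_abs, abs_of_nonneg hs]
    exact mul_le_mul_of_nonneg_left (hM p hp) hs
  -- lower norm bound in s • P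
  have hlb : ∀ (s : ℝ) (v : Fin d → ℝ), 0 ≤ s → v ∈ s • P → s * δ ≤ ‖v‖ := by
    rintro s v hs ⟨p, hp, rfl⟩
    have h1 : δ ≤ ‖p‖ := by
      have h2 := Metric.infDist_le_dist_of_mem (x := (0 : Fin d → ℝ)) hp
      rwa [dist_zero_left, ← hδdef] at h2
    rw [norm_smul, Real.norm_eq_abs, abs_of_nonneg hs]
    exact mul_le_mul_of_nonneg_left h1 hs
  -- 0 is not in s • P for s ≠ 0
  have hzero : ∀ s : ℝ, s ≠ 0 → (0 : Fin d → ℝ) ∉ s • P := by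
    intro s hs h
    rw [Set.mem_smul_set_iff_inv_smul_mem₀ hs, smul_zero] at h
    exact h0 h
  -- find a lattice point in s₁ • P
  obtain ⟨r, hr, hball⟩ := Metric.isOpen_iff.1 isOpen_interior c hc
  set s₁ : ℝ := 1 / r + 1 with hs₁def
  have hs₁ : 0 < s₁ := by positivity
  set z : Fin d → ℤ := fun i => round (s₁ * c i) with hz
  set zR : Fin d → ℝ := fun i => ((z i : ℝ)) with hzR
  have hzmem : zR ∈ s₁ • P := by
    rw [Set.mem_smul_set_iff_inv_smul_mem₀ (ne_of_gt hs₁)]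
    apply interior_subset
    apply hball
    rw [Metric.mem_ball]
    have h1 : ‖zR - s₁ • c‖ ≤ 1 / 2 := by
      rw [pi_norm_le_iff_of_nonneg (by norm_num)]
      intro i
      simp only [hzR, Pi.sub_apply, Pi.smul_apply, smul_eq_mul, Real.norm_eq_abs]
      rw [abs_sub_comm]
      exact abs_sub_round (s₁ * c i)
    have h2 : dist (s₁⁻¹ • zR) c = s₁⁻¹ * ‖zR - s₁ • c‖ := by
      rw [dist_eq_norm,
        show s₁⁻¹ • zR - c = s₁⁻¹ • (zR - s₁ • c) by
          rw [smul_sub, smul_smul, inv_mul_cancel₀ (ne_of_gt hs₁), one_smul],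
        norm_smul, Real.norm_eq_abs, abs_of_pos (inv_pos.2 hs₁)]
    rw [h2]
    have h3 : (1 : ℝ) / 2 < s₁ * r := by
      have : s₁ * r = 1 + r := by
        rw [hs₁def]; field_simp
      rw [this]; linarith
    calc s₁⁻¹ * ‖zR - s₁ • c‖ ≤ s₁⁻¹ * (1 / 2) :=
          mul_le_mul_of_nonneg_left h1 (inv_pos.2 hs₁).le
      _ < s₁⁻¹ * (s₁ * r) := mul_lt_mul_of_pos_left h3 (inv_pos.2 hs₁)
      _ = r := by field_simp
  -- upper limit S
  set S : ℝ := ‖zR‖ / δ + s₁ + 1 with hSdef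
  have hs₁S : s₁ ≤ S := by
    have h : 0 ≤ ‖zR‖ / δ := div_nonneg (norm_nonneg _) hδ.le
    rw [hSdef]
    linarith
  -- the compact set of scales for which zR belongs
  have hTc : ∀ (v : Fin d → ℝ) (aa bb : ℝ), 0 < aa →
      IsCompact (Set.Icc aa bb ∩ (fun s : ℝ => s⁻¹ • v) ⁻¹' P) := by
    intro v aa bb haa
    have hcont : ContinuousOn (fun s : ℝ => s⁻¹ • v) (Set.Icc aa bb) := by
      apply ContinuousOn.fun_smul _ continuousOn_const
      apply ContinuousOn.mono continuousOn_inv₀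
      intro s hs
      simp only [Set.mem_compl_iff, Set.mem_singleton_iff]
      exact ne_of_gt (lt_of_lt_of_le haa hs.1)
    exact isCompact_Icc.of_isClosed_subset
      (hcont.preimage_isClosed_of_isClosed isClosed_Icc hclosed)
      Set.inter_subset_left
  -- membership translation
  have hTmem : ∀ (v : Fin d → ℝ) (aa bb s : ℝ), 0 < aa →
      (s ∈ Set.Icc aa bb ∩ (fun s : ℝ => s⁻¹ • v) ⁻¹' P ↔
        s ∈ Set.Icc aa bb ∧ v ∈ s • P) := by
    intro v aa bb s haa
    constructor
    · rintro ⟨h1, h2⟩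
      exact ⟨h1, (Set.mem_smul_set_iff_inv_smul_mem₀
        (ne_of_gt (lt_of_lt_of_le haa h1.1)) _ _).2 h2⟩
    · rintro ⟨h1, h2⟩
      exact ⟨h1, (Set.mem_smul_set_iff_inv_smul_mem₀
        (ne_of_gt (lt_of_lt_of_le haa h1.1)) _ _).1 h2⟩
  set T : Set ℝ := Set.Icc s₁ S ∩ (fun s : ℝ => s⁻¹ • zR) ⁻¹' P with hTdef
  have hTcomp : IsCompact T := hTc zR s₁ S hs₁
  have hTne : T.Nonempty := by
    refine ⟨s₁, (hTmem zR s₁ S s₁ hs₁).2 ⟨⟨le_refl _, hs₁S⟩, hzmem⟩⟩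
  obtain ⟨s₀, hs₀T, hs₀max⟩ := hTcomp.exists_isGreatest hTne
  have hs₀mem := (hTmem zR s₁ S s₀ hs₁).1 hs₀T
  have hs₀Icc := hs₀mem.1
  have hs₀P : zR ∈ s₀ • P := hs₀mem.2
  have hs₀pos : 0 < s₀ := lt_of_lt_of_le hs₁ hs₀Icc.1
  -- s₀ is bounded strictly below S
  have hs₀S : s₀ + s₁ ≤ S := by
    have h1 : s₀ * δ ≤ ‖zR‖ := hlb s₀ zR hs₀pos.le hs₀P
    have h2 : s₀ ≤ ‖zR‖ / δ := (le_div_iff₀ hδ).2 h1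
    rw [hSdef]; linarith
  -- the finite box F
  set N : ℤ := ⌈S * M⌉ with hNdef
  set F : Set (Fin d → ℤ) := {y : Fin d → ℤ | ∀ i, y i ∈ Set.Icc (-N) N} with hFdef
  have hFfin : F.Finite := Set.Finite.pi' (fun _ => Set.finite_Icc _ _)
  have hmemF : ∀ (s : ℝ) (y : Fin d → ℤ), 0 ≤ s → s ≤ S →
      (fun i => (y i : ℝ)) ∈ s • P → y ∈ F := by
    intro s y hs hsS hy
    have h1 : ‖(fun i => (y i : ℝ))‖ ≤ S * M := by
      calc ‖(fun i => (y i : ℝ))‖ ≤ s * M := hub s _ hs hy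
        _ ≤ S * M := mul_le_mul_of_nonneg_right hsS hMpos.le
    intro i
    have h2 : |(y i : ℝ)| ≤ S * M := by
      have := norm_le_pi_norm (fun i => (y i : ℝ)) i
      simp only [Real.norm_eq_abs] at this
      linarith
    have h3 : |((y i : ℤ) : ℝ)| ≤ (N : ℝ) := h2.trans (Int.le_ceil _)
    have h4 : |y i| ≤ N := by exact_mod_cast h3
    exact abs_le.1 h4
  -- entry times
  set T' : (Fin d → ℤ) → Set ℝ := fun y =>
    Set.Icc (1 / M) S ∩ (fun s : ℝ => s⁻¹ • (fun i => (y i : ℝ))) ⁻¹' P with hT'def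
  have hMinv : (0 : ℝ) < 1 / M := by positivity
  have hT'comp : ∀ y, IsCompact (T' y) := fun y => hTc _ _ _ hMinv
  set a : (Fin d → ℤ) → ℝ := fun y => sInf (T' y) with hadef
  have haT' : ∀ y, (T' y).Nonempty → a y ∈ T' y := fun y hne =>
    (hT'comp y).sInf_mem hne
  have hale : ∀ y, ∀ s ∈ T' y, a y ≤ s := fun y s hs =>
    csInf_le (hT'comp y).bddBelow hs
  -- the finset of late entrants
  set G : Finset (Fin d → ℤ) :=
    hFfin.toFinset.filter (fun y => (T' y).Nonempty ∧ s₀ < a y) with hGdef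
  set E : Finset ℝ := insert (S - s₀) (G.image (fun y => a y - s₀)) with hEdef
  have hEne : E.Nonempty := ⟨S - s₀, Finset.mem_insert_self _ _⟩
  set ε₀ : ℝ := E.min' hEne with hε₀def
  have hε₀pos : 0 < ε₀ := by
    rw [hε₀def, Finset.lt_min'_iff]
    intro b hb
    rw [hEdef] at hb
    rcases Finset.mem_insert.1 hb with rfl | hb
    · linarith
    · obtain ⟨y, hy, rfl⟩ := Finset.mem_image.1 hb
      have := (Finset.mem_filter.1 hy).2.2
      linarith
  have hε₀S : ε₀ ≤ S - s₀ := Finset.min'_le _ _ (Finset.mem_insert_self _ _)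
  refine ⟨s₀, hs₀pos, ε₀, hε₀pos, ?_⟩
  intro ε hε hεε₀
  have hsum : 0 < s₀ + ε := by linarith
  have hsumS : s₀ + ε ≤ S := by linarith
  -- the two counted sets
  set Cε : Set (Fin d → ℤ) := {y : Fin d → ℤ | (fun i => (y i : ℝ)) ∈ (s₀ + ε) • P}
    with hCεdef
  set C0 : Set (Fin d → ℤ) := {y : Fin d → ℤ | (fun i => (y i : ℝ)) ∈ s₀ • P}
    with hC0def
  have hC0F : C0 ⊆ F := fun y hy => hmemF s₀ y hs₀pos.le (by linarith) hy
  have hC0fin : C0.Finite := hFfin.subset hC0F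
  -- Cε ⊆ C0
  have hsub : Cε ⊆ C0 := by
    intro y hy
    have hyP : (fun i => (y i : ℝ)) ∈ (s₀ + ε) • P := hy
    have hyne : (fun i => (y i : ℝ)) ≠ 0 := by
      intro h
      exact hzero (s₀ + ε) (ne_of_gt hsum) (h ▸ hyP)
    have hynorm : (1 : ℝ) ≤ ‖(fun i => (y i : ℝ))‖ := by
      have : ∃ i, y i ≠ 0 := by
        by_contra h
        push_neg at h
        apply hyne
        funext i
        simp [h i]
      obtain ⟨i, hi⟩ := this
      have h1 : (1 : ℝ) ≤ |(y i : ℝ)| := by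
        have : (1 : ℤ) ≤ |y i| := Int.one_le_abs hi
        exact_mod_cast this
      have h2 := norm_le_pi_norm (fun i => (y i : ℝ)) i
      simp only [Real.norm_eq_abs] at h2
      linarith
    have hMle : 1 / M ≤ s₀ + ε := by
      have h1 : ‖(fun i => (y i : ℝ))‖ ≤ (s₀ + ε) * M := hub _ _ hsum.le hyP
      rw [div_le_iff₀ hMpos]
      calc (1 : ℝ) ≤ ‖(fun i => (y i : ℝ))‖ := hynorm
        _ ≤ (s₀ + ε) * M := h1
    have hmemT' : s₀ + ε ∈ T' y :=
      (hTmem _ _ _ _ hMinv).2 ⟨⟨hMle, hsumS⟩, hyP⟩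
    have hT'ne : (T' y).Nonempty := ⟨_, hmemT'⟩
    have haley : a y ≤ s₀ + ε := hale y _ hmemT'
    have hyF : y ∈ F := hmemF (s₀ + ε) y hsum.le hsumS hyP
    by_cases hcase : s₀ < a y
    · -- y is a late entrant : contradiction
      have hyG : y ∈ G := Finset.mem_filter.2 ⟨hFfin.mem_toFinset.2 hyF, hT'ne, hcase⟩
      have : ε₀ ≤ a y - s₀ :=
        Finset.min'_le _ _ (Finset.mem_insert_of_mem
          (Finset.mem_image.2 ⟨y, hyG, rfl⟩))
      linarith
    · push_neg at hcase
      have haym := (hTmem _ _ _ _ hMinv).1 (haT' y hT'ne)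
      have haypos : 0 < a y := lt_of_lt_of_le hMinv haym.1.1
      exact mem_smul_of_between hPc haypos hcase (by linarith) haym.2 hyP
  -- z witnesses the strict inclusion
  have hzC0 : z ∈ C0 := hs₀P
  have hzCε : z ∉ Cε := by
    intro h
    have h1 : (s₀ + ε) ∈ T :=
      (hTmem zR s₁ S _ hs₁).2 ⟨⟨by linarith [hs₀Icc.1], hsumS⟩, h⟩
    have := hs₀max h1
    linarith
  have hss : Cε ⊂ C0 := ⟨hsub, fun h => hzCε (h hzC0)⟩
  have := Set.ncard_lt_ncard hss hC0fin
  simpa only [latticeCount] using this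
end

section
/- Let P ⊆ ℝ^d be a full-dimensional polytope such that L_P(s) = L_P(⌊s⌋) for all real s ≥ 0. Then P can be written as P = {x ∈ ℝ^d : ⟨a_i, x⟩ ≤ b_i, i = 1,…,n} where each b_i ∈ {0,1} and a_i ∈ ℤ^d whenever b_i = 1. -/
open Pointwise

namespace Stmt5Aux

variable {d : ℕ}

/-- dot product on `Fin d → ℝ`. -/
def dot (u x : Fin d → ℝ) : ℝ := ∑ j, u j * x j

lemma dot_single_left (y : Fin d → ℝ) (j : Fin d) : dot (Pi.single j 1) y = y j := by
  simp [dot, Pi.single_apply]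

lemma dot_add_right (u x y : Fin d → ℝ) : dot u (x + y) = dot u x + dot u y := by
  simp [dot, mul_add, Finset.sum_add_distrib]

lemma dot_smul_right (u x : Fin d → ℝ) (t : ℝ) : dot u (t • x) = t * dot u x := by
  simp only [dot, Finset.mul_sum, Pi.smul_apply, smul_eq_mul]
  exact Finset.sum_congr rfl fun i _ => by ring

lemma dot_smul_left (u x : Fin d → ℝ) (t : ℝ) : dot (t • u) x = t * dot u x := by
  simp only [dot, Finset.mul_sum, Pi.smul_apply, smul_eq_mul]
  exact Finset.sum_congr rfl fun i _ => by ring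

lemma dot_sub_right (u x y : Fin d → ℝ) : dot u (x - y) = dot u x - dot u y := by
  simp [dot, mul_sub, Finset.sum_sub_distrib]

lemma dot_neg_right (u x : Fin d → ℝ) : dot u (-x) = - dot u x := by
  simp [dot]

lemma dot_neg_left (u x : Fin d → ℝ) : dot (-u) x = - dot u x := by
  simp [dot]

lemma dot_zero_right (u : Fin d → ℝ) : dot u 0 = 0 := by simp [dot]

lemma dot_zero_left (x : Fin d → ℝ) : dot 0 x = 0 := by simp [dot]

lemma isLinearMap_dot (u : Fin d → ℝ) : IsLinearMap ℝ (dot u) :=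
  ⟨fun x y => dot_add_right u x y, fun t x => by rw [dot_smul_right]; rfl⟩

/-- dot as a linear map in the second argument. -/
noncomputable def dotL (u : Fin d → ℝ) : (Fin d → ℝ) →ₗ[ℝ] ℝ :=
  (isLinearMap_dot u).mk' _

@[simp] lemma dotL_apply (u x : Fin d → ℝ) : dotL u x = dot u x := rfl

lemma dot_sum_right {ι : Type*} (u : Fin d → ℝ) (s : Finset ι) (w : ι → ℝ) (z : ι → Fin d → ℝ) :
    dot u (∑ i ∈ s, w i • z i) = ∑ i ∈ s, w i * dot u (z i) := by
  have := map_sum (dotL u) (fun i => w i • z i) s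
  simp only [dotL_apply] at this
  rw [this]
  exact Finset.sum_congr rfl fun i _ => dot_smul_right u (z i) (w i)

lemma convex_halfspace_dot (u : Fin d → ℝ) (c : ℝ) : Convex ℝ {x | dot u x ≤ c} :=
  convex_halfSpace_le (isLinearMap_dot u) c

lemma dot_single (u : Fin d → ℝ) (j : Fin d) : dot u (Pi.single j 1) = u j := by
  simp [dot, Pi.single_apply]



lemma inner_eq_dot (x y : EuclideanSpace ℝ (Fin d)) :
    inner (𝕜 := ℝ) x y = dot x y := by
  simp [dot, PiLp.inner_apply, RCLike.inner_apply, mul_comm]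

/-- If the span of `S` is proper, there is a nonzero vector orthogonal to it. -/
lemma exists_dot_orth (S : Set (Fin d → ℝ)) (hS : Submodule.span ℝ S ≠ ⊤) :
    ∃ h : Fin d → ℝ, h ≠ 0 ∧ ∀ z ∈ Submodule.span ℝ S, dot h z = 0 := by
  set e := WithLp.linearEquiv 2 ℝ (Fin d → ℝ) with he
  set K : Submodule ℝ (EuclideanSpace ℝ (Fin d)) :=
    (Submodule.span ℝ S).comap e.toLinearMap with hK
  have hS' : K ≠ ⊤ := fun hK' => hS (Submodule.eq_top_iff'.mpr fun y => by
    have := (Submodule.eq_top_iff'.mp hK') (WithLp.toLp 2 y)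
    simpa [K, e] using this)
  have hbot : Kᗮ ≠ ⊥ := fun hb => hS' (Submodule.orthogonal_eq_bot_iff.mp hb)
  obtain ⟨h, hhK, hh0⟩ := Submodule.exists_mem_ne_zero_of_ne_bot hbot
  refine ⟨h.ofLp, fun h' => hh0 (by simpa using congrArg (WithLp.toLp 2) h'), ?_⟩
  intro z hz
  have hz' : (WithLp.toLp 2 z : EuclideanSpace ℝ (Fin d)) ∈ K := by simpa [K, e] using hz
  have := (Submodule.mem_orthogonal K h).mp hhK _ hz'
  rw [inner_eq_dot] at this
  have hsymm : dot (z : Fin d → ℝ) h.ofLp = dot h.ofLp z := by simp [dot, mul_comm]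
  rw [← hsymm]; simpa using this

lemma mem_orth_of_dot {S : Set (EuclideanSpace ℝ (Fin d))}
    (u : EuclideanSpace ℝ (Fin d)) (hu : ∀ z ∈ S, dot u z = 0) :
    u ∈ (Submodule.span ℝ S)ᗮ := by
  rw [Submodule.mem_orthogonal]
  intro v hv
  induction hv using Submodule.span_induction with
  | mem x hx =>
      rw [inner_eq_dot]
      have : dot x u = dot u x := by simp [dot, mul_comm]
      rw [this]; exact hu x hx
  | zero => simp
  | add x y hx hy ihx ihy => rw [inner_add_left, ihx, ihy]; ring
  | smul a x hx ih => rw [inner_smul_left, ih]; simp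

/-- Two nonzero vectors orthogonal to the same `d-1` independent vectors are proportional. -/
lemma proportional_of_orth {ι : Type} [Fintype ι] (g : ι → (Fin d → ℝ))
    (hg : LinearIndependent ℝ g) (hcard : Fintype.card ι + 1 = d)
    (u₁ u₂ : Fin d → ℝ) (h1 : u₁ ≠ 0) (h2 : u₂ ≠ 0)
    (hg1 : ∀ i, dot u₁ (g i) = 0) (hg2 : ∀ i, dot u₂ (g i) = 0) :
    ∃ lam : ℝ, lam ≠ 0 ∧ u₂ = lam • u₁ := by
  have hg' : LinearIndependent ℝ (fun i => (WithLp.toLp 2 (g i) : EuclideanSpace ℝ (Fin d))) :=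
    LinearIndependent.of_comp (WithLp.linearEquiv 2 ℝ (Fin d → ℝ)).toLinearMap hg
  set K : Submodule ℝ (EuclideanSpace ℝ (Fin d)) :=
    Submodule.span ℝ (Set.range fun i => (WithLp.toLp 2 (g i) : EuclideanSpace ℝ (Fin d))) with hK
  have hrk : Module.finrank ℝ K = Fintype.card ι := finrank_span_eq_card hg'
  have hfull : Module.finrank ℝ (EuclideanSpace ℝ (Fin d)) = d := by
    rw [finrank_euclideanSpace, Fintype.card_fin]
  have hsum := Submodule.finrank_add_finrank_orthogonal (𝕜 := ℝ) K
  rw [hrk, hfull] at hsum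
  have hrkO : Module.finrank ℝ Kᗮ = 1 := by omega
  have hu1 : (WithLp.toLp 2 u₁ : EuclideanSpace ℝ (Fin d)) ∈ Kᗮ := by
    apply mem_orth_of_dot
    rintro z ⟨i, rfl⟩; exact hg1 i
  have hu2 : (WithLp.toLp 2 u₂ : EuclideanSpace ℝ (Fin d)) ∈ Kᗮ := by
    apply mem_orth_of_dot
    rintro z ⟨i, rfl⟩; exact hg2 i
  have h1' : (WithLp.toLp 2 u₁ : EuclideanSpace ℝ (Fin d)) ≠ 0 :=
    fun h => h1 (by simpa using congrArg WithLp.ofLp h)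
  have hspan : Submodule.span ℝ {(WithLp.toLp 2 u₁ : EuclideanSpace ℝ (Fin d))} = Kᗮ := by
    apply Submodule.eq_of_le_of_finrank_le
    · rw [Submodule.span_le, Set.singleton_subset_iff]; exact hu1
    · have e1 : Module.finrank ℝ
          ↥(Submodule.span ℝ {(WithLp.toLp 2 u₁ : EuclideanSpace ℝ (Fin d))}) = 1 :=
        finrank_span_singleton h1'
      exact le_of_eq (hrkO.trans e1.symm)
  rw [← hspan] at hu2
  obtain ⟨lam, hlam⟩ := Submodule.mem_span_singleton.mp hu2
  refine ⟨lam, ?_, ?_⟩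
  · intro h0
    rw [h0, zero_smul] at hlam
    exact h2 (by simpa using congrArg WithLp.ofLp hlam.symm)
  · simpa using congrArg WithLp.ofLp hlam.symm



lemma hull_dot_le {V : Finset (Fin d → ℝ)} {u : Fin d → ℝ} {c : ℝ}
    (h : ∀ w ∈ V, dot u w ≤ c) : ∀ y ∈ convexHull ℝ (V : Set (Fin d → ℝ)), dot u y ≤ c :=
  fun _ hy => convexHull_min h (convex_halfSpace_le (isLinearMap_dot u) c) hy

/-- A uniform coordinate bound on a polytope. -/
lemma exists_coord_bound (V : Finset (Fin d → ℝ)) :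
    ∃ R : ℝ, 0 ≤ R ∧ ∀ y ∈ convexHull ℝ (V : Set (Fin d → ℝ)), ∀ j, |y j| ≤ R := by
  refine ⟨∑ w ∈ V, ∑ j, |w j|, by positivity, ?_⟩
  intro y hy j
  rw [abs_le]
  constructor
  · have := hull_dot_le (V := V) (u := -(Pi.single j 1)) (c := ∑ w ∈ V, ∑ j, |w j|)
      (fun w hw => ?_) y hy
    · rw [dot_neg_left, dot_single_left] at this; linarith
    · rw [dot_neg_left, dot_single_left]
      have h1 : |w j| ≤ ∑ j', |w j'| := Finset.single_le_sum (f := fun j' => |w j'|)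
        (fun _ _ => abs_nonneg _) (Finset.mem_univ j)
      have h2 : ∑ j', |w j'| ≤ ∑ w' ∈ V, ∑ j', |w' j'| :=
        Finset.single_le_sum (f := fun w' => ∑ j', |w' j'|)
        (fun _ _ => Finset.sum_nonneg fun _ _ => abs_nonneg _) hw
      have := neg_abs_le (w j)
      linarith
  · have := hull_dot_le (V := V) (u := Pi.single j 1) (c := ∑ w ∈ V, ∑ j, |w j|)
      (fun w hw => ?_) y hy
    · rwa [dot_single_left] at this
    · rw [dot_single_left]
      have h1 : |w j| ≤ ∑ j', |w j'| := Finset.single_le_sum (f := fun j' => |w j'|)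
        (fun _ _ => abs_nonneg _) (Finset.mem_univ j)
      have h2 : ∑ j', |w j'| ≤ ∑ w' ∈ V, ∑ j', |w' j'| :=
        Finset.single_le_sum (f := fun w' => ∑ j', |w' j'|)
        (fun _ _ => Finset.sum_nonneg fun _ _ => abs_nonneg _) hw
      have := le_abs_self (w j)
      linarith

lemma smul_set_mono' {P : Set (Fin d → ℝ)} (hconv : Convex ℝ P) (h0 : (0 : Fin d → ℝ) ∈ P)
    {s t : ℝ} (hs : 0 ≤ s) (hst : s ≤ t) : s • P ⊆ t • P := by
  rintro y ⟨p, hp, rfl⟩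
  rcases eq_or_lt_of_le (hs.trans hst) with ht | ht
  · have hs0 : s = 0 := le_antisymm (hst.trans ht.symm.le) hs
    subst hs0
    exact ⟨p, hp, by rw [← ht]⟩
  · have hq : (s / t) • p ∈ P := by
      have hcomb := hconv hp h0 (div_nonneg hs ht.le)
        (sub_nonneg.mpr (div_le_one_of_le₀ hst ht.le)) (add_sub_cancel _ _)
      simpa using hcomb
    refine ⟨(s / t) • p, hq, ?_⟩
    show t • ((s / t) • p) = s • p
    rw [smul_smul, mul_div_cancel₀ _ (ne_of_gt ht)]

lemma lattice_finite {Q : Set (Fin d → ℝ)} (R : ℝ)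
    (hR : ∀ y ∈ Q, ∀ j, |y j| ≤ R) :
    {x : Fin d → ℤ | (fun i => (x i : ℝ)) ∈ Q}.Finite := by
  apply Set.Finite.subset (Set.finite_Icc (fun _ : Fin d => -⌈R⌉) (fun _ => ⌈R⌉))
  intro x hx
  simp only [Set.mem_Icc, Pi.le_def] at *
  constructor
  · intro j
    have h1 := hR _ hx j
    rw [abs_le] at h1
    have : -(⌈R⌉ : ℝ) ≤ (x j : ℝ) := le_trans (by have := Int.le_ceil R; linarith) h1.1
    exact_mod_cast this
  · intro j
    have h1 := hR _ hx j
    rw [abs_le] at h1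
    have : (x j : ℝ) ≤ (⌈R⌉ : ℝ) := h1.2.trans (Int.le_ceil R)
    exact_mod_cast this

/-- Key consequence of the Ehrhart hypothesis: lattice points of `t • P` lie in `⌊t⌋ • P`. -/
lemma lattice_floor {P : Set (Fin d → ℝ)} {V : Finset (Fin d → ℝ)}
    (hPV : P = convexHull ℝ (V : Set (Fin d → ℝ)))
    (hL : ∀ s : ℝ, 0 ≤ s → latticeCount (s • P) = latticeCount ((⌊s⌋ : ℝ) • P))
    (hconv : Convex ℝ P) (h0 : (0 : Fin d → ℝ) ∈ P)
    {t : ℝ} (ht : 0 ≤ t) :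
    ∀ z : Fin d → ℤ, (fun i => (z i : ℝ)) ∈ t • P → (fun i => (z i : ℝ)) ∈ (⌊t⌋ : ℝ) • P := by
  obtain ⟨R, hR0, hRb⟩ := exists_coord_bound V
  have hfloor0 : (0:ℝ) ≤ (⌊t⌋ : ℝ) := by exact_mod_cast Int.floor_nonneg.mpr ht
  have hsub : (⌊t⌋ : ℝ) • P ⊆ t • P := smul_set_mono' hconv h0 hfloor0 (Int.floor_le t)
  have hsub' : {x : Fin d → ℤ | (fun i => (x i : ℝ)) ∈ (⌊t⌋ : ℝ) • P} ⊆
      {x : Fin d → ℤ | (fun i => (x i : ℝ)) ∈ t • P} := fun x hx => hsub hx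
  have hfin : {x : Fin d → ℤ | (fun i => (x i : ℝ)) ∈ t • P}.Finite := by
    apply lattice_finite (t * R)
    rintro y ⟨p, hp, rfl⟩ j
    rw [hPV] at hp
    have := hRb p hp j
    simp only [Pi.smul_apply, smul_eq_mul, abs_mul, abs_of_nonneg ht]
    exact mul_le_mul_of_nonneg_left this ht
  have := Set.eq_of_subset_of_ncard_le hsub' (le_of_eq (hL t ht)) hfin
  intro z hz
  have hz2 : z ∈ {x : Fin d → ℤ | (fun i => (x i : ℝ)) ∈ t • P} := hz
  rw [← this] at hz2
  exact hz2

/-- The origin belongs to `P`. -/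
lemma zero_mem_P {P : Set (Fin d → ℝ)} {V : Finset (Fin d → ℝ)}
    (hPV : P = convexHull ℝ (V : Set (Fin d → ℝ)))
    (hne : P.Nonempty)
    (hL : ∀ s : ℝ, 0 ≤ s → latticeCount (s • P) = latticeCount ((⌊s⌋ : ℝ) • P)) :
    (0 : Fin d → ℝ) ∈ P := by
  obtain ⟨R, hR0, hRb⟩ := exists_coord_bound V
  set s : ℝ := (2 * (R + 1))⁻¹ with hs
  have hspos : 0 < s := by positivity
  have hslt : s < 1 := by
    rw [hs]
    rw [inv_lt_one_iff₀]
    right; linarith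
  have hfl : ⌊s⌋ = 0 := Int.floor_eq_zero_iff.mpr ⟨hspos.le, hslt⟩
  have h1 := hL s hspos.le
  rw [hfl] at h1
  have hzero : ((0:ℤ):ℝ) • P = (0 : Set (Fin d → ℝ)) := by
    rw [Int.cast_zero]; exact Set.zero_smul_set hne
  rw [hzero] at h1
  have h2 : {x : Fin d → ℤ | (fun i => (x i : ℝ)) ∈ (0 : Set (Fin d → ℝ))} = {0} := by
    ext x
    simp only [Set.mem_setOf_eq, Set.mem_zero, Set.mem_singleton_iff]
    constructor
    · intro h
      funext j
      have h5 := congrFun h j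
      simp only [Pi.zero_apply] at h5
      exact_mod_cast h5
    · intro h; subst h; funext j; simp
  simp only [latticeCount] at h1
  rw [h2, Set.ncard_singleton] at h1
  have hne2 : {x : Fin d → ℤ | (fun i => (x i : ℝ)) ∈ s • P}.Nonempty := by
    apply Set.nonempty_of_ncard_ne_zero
    rw [h1]
    exact one_ne_zero
  obtain ⟨x, p, hp, hxp⟩ := hne2
  -- each coordinate of x is an integer of absolute value < 1, hence x = 0
  have hx0 : ∀ j, x j = 0 := by
    intro j
    have hcoord : (x j : ℝ) = s * p j := by
      have := congrFun hxp j
      simpa using this.symm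
    have hb := hRb p (hPV ▸ hp) j
    have : |(x j : ℝ)| < 1 := by
      rw [hcoord, abs_mul, abs_of_nonneg hspos.le]
      have h3 : s * |p j| ≤ s * R := mul_le_mul_of_nonneg_left hb hspos.le
      have h4 : s * R < 1 := by
        rw [hs]
        rw [inv_mul_lt_iff₀ (by positivity)]
        linarith
      linarith
    have hlt : ((|x j| : ℤ) : ℝ) < 1 := by rw [Int.cast_abs]; exact this
    have hlt2 : |x j| < 1 := by exact_mod_cast hlt
    obtain ⟨hlo, hhi⟩ := abs_lt.mp hlt2
    clear hlt hlt2 hcoord hb h1 h2 hxp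
    omega
  have hcast0 : (fun i => (x i : ℝ)) = (0 : Fin d → ℝ) := by
    funext j; simp [hx0 j]
  have hsp0 : s • p = 0 := by
    have h7 : s • p = fun i => (x i : ℝ) := hxp
    rw [h7, hcast0]
  rcases smul_eq_zero.mp hsp0 with h | h
  · exact absurd h (ne_of_gt hspos)
  · exact h ▸ hp



/-- Integrality of normals of facets at level 1. -/
lemma dot_integral {P : Set (Fin d → ℝ)} (hconv : Convex ℝ P) (hne : P.Nonempty)
    (hfloor : ∀ t : ℝ, 0 ≤ t → ∀ z : Fin d → ℤ,
      (fun i => (z i : ℝ)) ∈ t • P → (fun i => (z i : ℝ)) ∈ ((⌊t⌋ : ℤ) : ℝ) • P)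
    (u : Fin d → ℝ) (hu : ∀ y ∈ P, dot u y ≤ 1)
    (v : Fin d → (Fin d → ℝ)) (hvP : ∀ i, v i ∈ P) (hv1 : ∀ i, dot u (v i) = 1)
    (hli : LinearIndependent ℝ v) (hd : 0 < d) :
    ∃ a' : Fin d → ℤ, u = fun j => (a' j : ℝ) := by
  haveI : Nonempty (Fin d) := ⟨⟨0, hd⟩⟩
  have card_eq : Fintype.card (Fin d) = Module.finrank ℝ (Fin d → ℝ) := by
    rw [Module.finrank_pi]
  set bb := basisOfLinearIndependentOfCardEqFinrank hli card_eq with hbbdef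
  have hbb : ⇑bb = v := coe_basisOfLinearIndependentOfCardEqFinrank hli card_eq
  set φ : (Fin d → ℝ) ≃ₗ[ℝ] (Fin d → ℝ) := bb.equivFun with hφdef
  -- key: lattice points in the cone over the simplex have integral dot value
  have key : ∀ z : Fin d → ℤ, (∀ i, 0 ≤ φ (fun j => (z j : ℝ)) i) →
      ∃ m : ℤ, dot u (fun j => (z j : ℝ)) = m := by
    intro z hznn
    set zr : Fin d → ℝ := fun j => (z j : ℝ) with hzr
    set lam : Fin d → ℝ := φ zr with hlam
    have hrep : ∑ i, lam i • v i = zr := by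
      have := Module.Basis.sum_equivFun bb zr
      rwa [hbb] at this
    set t : ℝ := ∑ i, lam i with htdef
    have hdot : dot u zr = t := by
      rw [← hrep, dot_sum_right]
      simp [hv1, htdef]
    have ht : 0 ≤ t := Finset.sum_nonneg fun i _ => hznn i
    have hzt : zr ∈ t • P := by
      rcases eq_or_lt_of_le ht with ht0 | htpos
      · have hall : ∀ i ∈ Finset.univ, lam i = 0 :=
          (Finset.sum_eq_zero_iff_of_nonneg fun i _ => hznn i).mp ht0.symm
        have hz0 : zr = 0 := by
          rw [← hrep]
          apply Finset.sum_eq_zero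
          intro i hi
          rw [hall i hi, zero_smul]
        rw [← ht0, Set.zero_smul_set hne, hz0]
        exact Set.zero_mem_zero
      · set p : Fin d → ℝ := ∑ i, (lam i / t) • v i with hp
        have hpP : p ∈ P := by
          apply hconv.sum_mem
          · intro i _; exact div_nonneg (hznn i) ht
          · rw [← Finset.sum_div, ← htdef, div_self (ne_of_gt htpos)]
          · intro i _; exact hvP i
        refine ⟨p, hpP, ?_⟩
        show t • p = zr
        rw [hp, Finset.smul_sum, ← hrep]
        apply Finset.sum_congr rfl
        intro i _
        rw [smul_smul, mul_div_cancel₀ _ (ne_of_gt htpos)]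
    obtain ⟨p', hp', hpe⟩ := hfloor t ht z hzt
    have hfl0 : (0:ℝ) ≤ ((⌊t⌋ : ℤ) : ℝ) := by exact_mod_cast Int.floor_nonneg.mpr ht
    have hle : t ≤ ((⌊t⌋ : ℤ) : ℝ) := by
      have h1 : dot u ((((⌊t⌋ : ℤ) : ℝ)) • p') = ((⌊t⌋ : ℤ) : ℝ) * dot u p' :=
        dot_smul_right _ _ _
      have hpe' : ((⌊t⌋ : ℤ) : ℝ) • p' = zr := hpe
      have h2 : dot u zr = ((⌊t⌋ : ℤ) : ℝ) * dot u p' := by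
        rw [← hpe', h1]
      have h3 : ((⌊t⌋ : ℤ) : ℝ) * dot u p' ≤ ((⌊t⌋ : ℤ) : ℝ) * 1 :=
        mul_le_mul_of_nonneg_left (hu p' hp') hfl0
      have h4 : dot u zr = t := hdot
      linarith [h2, h3, h4]
    have heq : t = ((⌊t⌋ : ℤ) : ℝ) := le_antisymm hle (Int.floor_le t)
    exact ⟨⌊t⌋, hdot.trans heq⟩
  -- continuity of the coordinates
  have cont : Continuous fun y : Fin d → ℝ => φ y :=
    LinearMap.continuous_of_finiteDimensional (φ.toLinearMap)
  have conti : ∀ i, Continuous fun y : Fin d → ℝ => φ y i :=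
    fun i => (continuous_apply i).comp cont
  set M : Fin d → ℝ := ∑ i, v i with hM
  have hφM : ∀ i, 0 < φ M i := by
    have h1 : φ M = ∑ k, φ (v k) := by
      rw [hM, map_sum]
    intro i
    rw [h1]
    have h2 : ∀ k, φ (v k) i = if k = i then 1 else 0 := by
      intro k
      have := Module.Basis.equivFun_self bb k i
      rwa [hbb] at this
    rw [Finset.sum_apply]
    rw [Finset.sum_congr rfl fun k _ => h2 k]
    simp
  -- an open cube around M where all coordinates are positive
  have hUopen : IsOpen {y : Fin d → ℝ | ∀ i, 0 < φ y i} := by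
    have : {y : Fin d → ℝ | ∀ i, 0 < φ y i} = ⋂ i, {y | 0 < φ y i} := by
      ext y; simp
    rw [this]
    exact isOpen_iInter_of_finite fun i => isOpen_lt continuous_const (conti i)
  have hMU : M ∈ {y : Fin d → ℝ | ∀ i, 0 < φ y i} := hφM
  rw [Metric.isOpen_iff] at hUopen
  obtain ⟨ε, hε, hball⟩ := hUopen M hMU
  -- choose a large integer N
  set N : ℕ := ⌈2/ε⌉₊ + 1 with hN
  have hNpos : (0:ℝ) < N := by positivity
  have hNbig : 2/ε < (N : ℝ) := by
    have := Nat.le_ceil (2/ε)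
    push_cast [hN]
    linarith
  have hcube : ∀ y : Fin d → ℝ, (∀ j, |y j - N * M j| ≤ 3/2) → ∀ i, 0 ≤ φ y i := by
    intro y hy i
    set y' : Fin d → ℝ := (N:ℝ)⁻¹ • y with hy'
    have hdist : dist y' M < ε := by
      have hb : dist y' M ≤ 3/(2*N) := by
        rw [dist_pi_le_iff (by positivity)]
        intro j
        rw [Real.dist_eq]
        have : y' j - M j = (N:ℝ)⁻¹ * (y j - N * M j) := by
          rw [hy']
          simp only [Pi.smul_apply, smul_eq_mul]
          field_simp
        rw [this, abs_mul, abs_of_nonneg (by positivity : (0:ℝ) ≤ (N:ℝ)⁻¹)]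
        calc (N:ℝ)⁻¹ * |y j - N * M j| ≤ (N:ℝ)⁻¹ * (3/2) :=
              mul_le_mul_of_nonneg_left (hy j) (by positivity)
          _ = 3/(2*N) := by field_simp
      have : 3/(2*(N:ℝ)) < ε := by
        rw [div_lt_iff₀ (by positivity)]
        have h4 : 2 < ε * N := by
          rw [div_lt_iff₀ hε] at hNbig
          linarith [hNbig]
        nlinarith
      linarith
    have hy'U := hball hdist
    have hyy : y = (N:ℝ) • y' := by
      rw [hy', smul_smul, mul_inv_cancel₀ (ne_of_gt hNpos), one_smul]
    have : φ y i = (N:ℝ) * φ y' i := by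
      rw [hyy, map_smul]
      rfl
    rw [this]
    have := hy'U i
    positivity
  -- the lattice point near N • M
  set z : Fin d → ℤ := fun j => round ((N:ℝ) * M j) with hz
  have hzb : ∀ j, |(z j : ℝ) - N * M j| ≤ 1/2 := by
    intro j
    rw [hz]
    rw [abs_sub_comm]
    exact abs_sub_round _
  have hzcond : ∀ i, 0 ≤ φ (fun j => (z j : ℝ)) i := by
    apply hcube
    intro j
    calc |(z j : ℝ) - N * M j| ≤ 1/2 := hzb j
      _ ≤ 3/2 := by norm_num
  have hint : ∀ j, ∃ m : ℤ, u j = m := by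
    intro j₀
    obtain ⟨m₁, hm₁⟩ := key z hzcond
    set z' : Fin d → ℤ := z + Pi.single j₀ (1:ℤ) with hz'
    have hcast : (fun i => ((z' i : ℤ) : ℝ))
        = (fun i => (z i : ℝ)) + Pi.single j₀ (1:ℝ) := by
      funext i
      by_cases h : i = j₀
      · subst h
        simp only [hz', Pi.add_apply, Pi.single_apply, if_pos rfl]
        push_cast
        ring
      · simp only [hz', Pi.add_apply, Pi.single_apply, if_neg h]
        push_cast
        ring
    obtain ⟨m₂, hm₂⟩ := key z' (by
      rw [hcast]
      apply hcube
      intro j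
      by_cases h : j = j₀
      · subst h
        simp only [Pi.add_apply, Pi.single_eq_same]
        have hb := abs_le.mp (hzb j)
        rw [abs_le]
        constructor <;> linarith [hb.1, hb.2]
      · simp only [Pi.add_apply, Pi.single_eq_of_ne h, add_zero]
        calc |(z j : ℝ) - N * M j| ≤ 1/2 := hzb j
          _ ≤ 3/2 := by norm_num)
    rw [hcast, dot_add_right, hm₁, dot_single] at hm₂
    refine ⟨m₂ - m₁, ?_⟩
    push_cast
    linarith
  choose a' ha' using hint
  exact ⟨a', funext ha'⟩

lemma dot_add_left (u v x : Fin d → ℝ) : dot (u + v) x = dot u x + dot v x := by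
  simp [dot, add_mul, Finset.sum_add_distrib]

/-- Active-set improvement: we can move to a feasible point whose active
constraints span the whole space, keeping the objective value above 1. -/
lemma active_improve (V : Finset (Fin d → ℝ)) (p₀ xx : Fin d → ℝ) (C : ℝ)
    (hbd : ∀ a : Fin d → ℝ, (∀ w ∈ V, dot a (w - p₀) ≤ 1) → ∑ j, |a j| ≤ C) :
    ∀ (k : ℕ) (a : Fin d → ℝ), (∀ w ∈ V, dot a (w - p₀) ≤ 1) → 1 < dot a xx →
    d - Module.finrank ℝ (Submodule.span ℝ
      ((fun w => w - p₀) '' {w | w ∈ V ∧ dot a (w - p₀) = 1})) ≤ k →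
    ∃ a' : Fin d → ℝ, (∀ w ∈ V, dot a' (w - p₀) ≤ 1) ∧ 1 < dot a' xx ∧
      Submodule.span ℝ ((fun w => w - p₀) '' {w | w ∈ V ∧ dot a' (w - p₀) = 1}) = ⊤ := by
  have hfrk : Module.finrank ℝ (Fin d → ℝ) = d := by
    rw [Module.finrank_pi, Fintype.card_fin]
  intro k
  induction k with
  | zero =>
      intro a hfeas hobj hk
      refine ⟨a, hfeas, hobj, ?_⟩
      apply Submodule.eq_top_of_finrank_eq
      have h1 := Submodule.finrank_le (Submodule.span ℝ
        ((fun w => w - p₀) '' {w | w ∈ V ∧ dot a (w - p₀) = 1}))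
      rw [hfrk] at h1 ⊢
      omega
  | succ k ih =>
      intro a hfeas hobj hk
      by_cases hsp : Submodule.span ℝ
          ((fun w => w - p₀) '' {w | w ∈ V ∧ dot a (w - p₀) = 1}) = ⊤
      · exact ⟨a, hfeas, hobj, hsp⟩
      obtain ⟨h, hne0, horth⟩ := exists_dot_orth _ hsp
      -- WLOG the objective direction is nonnegative
      set h' : Fin d → ℝ := if 0 ≤ dot h xx then h else -h with hh'
      have hne0' : h' ≠ 0 := by
        rw [hh']
        split
        · exact hne0
        · exact neg_ne_zero.mpr hne0
      have horth' : ∀ z ∈ Submodule.span ℝ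
          ((fun w => w - p₀) '' {w | w ∈ V ∧ dot a (w - p₀) = 1}), dot h' z = 0 := by
        intro z hz
        rw [hh']
        split
        · exact horth z hz
        · rw [dot_neg_left, horth z hz, neg_zero]
      have hobj' : 0 ≤ dot h' xx := by
        rw [hh']
        by_cases hcond : 0 ≤ dot h xx
        · rw [if_pos hcond]; exact hcond
        · rw [if_neg hcond, dot_neg_left]; push_neg at hcond; linarith
      -- the blocking set is nonempty
      set B : Finset (Fin d → ℝ) := V.filter (fun w => 0 < dot h' (w - p₀)) with hB
      have hBne : B.Nonempty := by
        by_contra hBe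
        rw [Finset.not_nonempty_iff_eq_empty] at hBe
        have hall : ∀ w ∈ V, dot h' (w - p₀) ≤ 0 := by
          intro w hw
          by_contra hgt
          push_neg at hgt
          have : w ∈ B := by rw [hB, Finset.mem_filter]; exact ⟨hw, hgt⟩
          rw [hBe] at this
          exact absurd this (Finset.notMem_empty w)
        obtain ⟨j₀, hj₀⟩ := Function.ne_iff.mp hne0'
        rw [Pi.zero_apply] at hj₀
        have hC0 : 0 ≤ C := le_trans (Finset.sum_nonneg fun j _ => abs_nonneg (a j)) (hbd a hfeas)
        set t : ℝ := (C + |a j₀| + 1)/|h' j₀| with ht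
        have htpos : 0 ≤ t := by
          apply div_nonneg
          · positivity
          · exact abs_nonneg _
        have hfeas2 : ∀ w ∈ V, dot (a + t • h') (w - p₀) ≤ 1 := by
          intro w hw
          rw [dot_add_left, dot_smul_left]
          have := mul_nonpos_of_nonneg_of_nonpos htpos (hall w hw)
          linarith [hfeas w hw]
        have hsum := hbd _ hfeas2
        have hterm : |(a + t • h') j₀| ≤ ∑ j, |(a + t • h') j| :=
          Finset.single_le_sum (f := fun j => |(a + t • h') j|)
            (fun _ _ => abs_nonneg _) (Finset.mem_univ j₀)
        have habs : |t * h' j₀| ≤ |(a + t • h') j₀| + |a j₀| := by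
          have : t * h' j₀ = (a + t • h') j₀ + (-(a j₀)) := by
            simp only [Pi.add_apply, Pi.smul_apply, smul_eq_mul]; ring
          rw [this]
          calc |(a + t • h') j₀ + (-(a j₀))| ≤ |(a + t • h') j₀| + |(-(a j₀))| := abs_add_le _ _
            _ = |(a + t • h') j₀| + |a j₀| := by rw [abs_neg]
        have ht2 : |t * h' j₀| = C + |a j₀| + 1 := by
          rw [abs_mul, abs_of_nonneg htpos, ht, div_mul_cancel₀]
          exact abs_ne_zero.mpr hj₀
        linarith
      obtain ⟨wmin, hwminB, hmin⟩ := Finset.exists_min_image B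
        (fun w => (1 - dot a (w - p₀))/(dot h' (w - p₀))) hBne
      rw [hB, Finset.mem_filter] at hwminB
      obtain ⟨hwminV, hwminpos⟩ := hwminB
      set ts : ℝ := (1 - dot a (wmin - p₀))/(dot h' (wmin - p₀)) with hts
      have hts0 : 0 ≤ ts := div_nonneg (by linarith [hfeas wmin hwminV]) hwminpos.le
      set a' : Fin d → ℝ := a + ts • h' with ha'
      have hfeas' : ∀ w ∈ V, dot a' (w - p₀) ≤ 1 := by
        intro w hw
        rw [ha', dot_add_left, dot_smul_left]
        by_cases hwB : 0 < dot h' (w - p₀)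
        · have hmem : w ∈ B := by rw [hB, Finset.mem_filter]; exact ⟨hw, hwB⟩
          have := hmin w hmem
          have h2 : ts * dot h' (w - p₀) ≤
              ((1 - dot a (w - p₀))/(dot h' (w - p₀))) * dot h' (w - p₀) :=
            mul_le_mul_of_nonneg_right this hwB.le
          rw [div_mul_cancel₀ _ (ne_of_gt hwB)] at h2
          linarith
        · push_neg at hwB
          have := mul_nonpos_of_nonneg_of_nonpos hts0 hwB
          linarith [hfeas w hw]
      have hobj2 : 1 < dot a' xx := by
        rw [ha', dot_add_left, dot_smul_left]
        have := mul_nonneg hts0 hobj'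
        linarith
      -- the active set grows strictly
      have hsub : ((fun w => w - p₀) '' {w | w ∈ V ∧ dot a (w - p₀) = 1}) ⊆
          ((fun w => w - p₀) '' {w | w ∈ V ∧ dot a' (w - p₀) = 1}) := by
        rintro z ⟨w, ⟨hwV, hwact⟩, rfl⟩
        refine ⟨w, ⟨hwV, ?_⟩, rfl⟩
        have hz : dot h' (w - p₀) = 0 := by
          apply horth'
          exact Submodule.subset_span ⟨w, ⟨hwV, hwact⟩, rfl⟩
        rw [ha', dot_add_left, dot_smul_left, hz, mul_zero, add_zero, hwact]
      have hwmin_act : dot a' (wmin - p₀) = 1 := by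
        rw [ha', dot_add_left, dot_smul_left, hts,
          div_mul_cancel₀ _ (ne_of_gt hwminpos)]
        ring
      have hwmin_nin : (wmin - p₀) ∉ Submodule.span ℝ
          ((fun w => w - p₀) '' {w | w ∈ V ∧ dot a (w - p₀) = 1}) := by
        intro hmem
        have := horth' _ hmem
        linarith
      have hlt : Submodule.span ℝ ((fun w => w - p₀) '' {w | w ∈ V ∧ dot a (w - p₀) = 1})
          < Submodule.span ℝ ((fun w => w - p₀) '' {w | w ∈ V ∧ dot a' (w - p₀) = 1}) := by
        apply lt_of_le_of_ne (Submodule.span_mono hsub)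
        intro heq
        apply hwmin_nin
        rw [heq]
        exact Submodule.subset_span ⟨wmin, ⟨hwminV, hwmin_act⟩, rfl⟩
      have hrklt := Submodule.finrank_lt_finrank_of_lt hlt
      exact ih a' hfeas' hobj2 (by omega)

/-- Separation of a point from `P` by an admissible halfspace whose boundary
contains `d` points of `V` that are affinely independent over `p₀`. -/
lemma separation {P : Set (Fin d → ℝ)} {V : Finset (Fin d → ℝ)}
    (hPV : P = convexHull ℝ (V : Set (Fin d → ℝ)))
    (p₀ : Fin d → ℝ) (ε : ℝ) (hε : 0 < ε)
    (hcube : ∀ y : Fin d → ℝ, (∀ j, |y j - p₀ j| ≤ ε) → y ∈ P)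
    (h0 : (0 : Fin d → ℝ) ∈ P) (hd : 0 < d)
    {x : Fin d → ℝ} (hx : x ∉ P) :
    ∃ (u : Fin d → ℝ) (c : ℝ) (v : Fin d → (Fin d → ℝ)),
      (∀ y ∈ P, dot u y ≤ c) ∧ c < dot u x ∧ (c = 0 ∨ c = 1) ∧
      (∀ i, v i ∈ V) ∧ LinearIndependent ℝ (fun i => v i - p₀) ∧
      (∀ i, dot u (v i) = c) := by
  have hconv : Convex ℝ P := hPV ▸ convex_convexHull ℝ _
  have hclosed : IsClosed P := by
    rw [hPV]
    exact (V.finite_toSet.isCompact_convexHull ℝ).isClosed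
  have hp₀ : p₀ ∈ P := hcube p₀ (fun j => by simp [hε.le])
  obtain ⟨f, α, hfP, hfx⟩ := geometric_hahn_banach_closed_point hconv hclosed hx
  -- represent f by a vector
  set af : Fin d → ℝ := fun j => f (fun k => if j = k then 1 else 0) with haf
  have hf_dot : ∀ y : Fin d → ℝ, f y = dot af y := by
    intro y
    conv_lhs => rw [pi_eq_sum_univ y]
    rw [map_sum]
    rw [dot]
    apply Finset.sum_congr rfl
    intro j _
    rw [map_smul]
    simp only [smul_eq_mul, haf]
    ring
  have hβ : 0 < α - f p₀ := by linarith [hfP p₀ hp₀]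
  set β : ℝ := α - f p₀ with hβdef
  set a₀ : Fin d → ℝ := β⁻¹ • af with ha₀
  have hVP : ∀ w ∈ V, w ∈ P := fun w hw => hPV ▸ subset_convexHull ℝ _ hw
  have hdot_p : ∀ (a : Fin d → ℝ) (y : Fin d → ℝ), dot a (y - p₀) = dot a y - dot a p₀ :=
    fun a y => dot_sub_right a y p₀
  have hfeas₀ : ∀ w ∈ V, dot a₀ (w - p₀) ≤ 1 := by
    intro w hw
    rw [hdot_p, ha₀, dot_smul_left, dot_smul_left, ← hf_dot, ← hf_dot]
    have hfw : f w < α := hfP w (hVP w hw)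
    have : β⁻¹ * f w - β⁻¹ * f p₀ = β⁻¹ * (f w - f p₀) := by ring
    rw [this]
    rw [show (1:ℝ) = β⁻¹ * β from (inv_mul_cancel₀ (ne_of_gt hβ)).symm]
    apply mul_le_mul_of_nonneg_left _ (inv_nonneg.mpr hβ.le)
    · linarith
  have hobj₀ : 1 < dot a₀ (x - p₀) := by
    rw [hdot_p, ha₀, dot_smul_left, dot_smul_left, ← hf_dot, ← hf_dot]
    have : β⁻¹ * f x - β⁻¹ * f p₀ = β⁻¹ * (f x - f p₀) := by ring
    rw [this]
    rw [show (1:ℝ) = β⁻¹ * β from (inv_mul_cancel₀ (ne_of_gt hβ)).symm]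
    apply mul_lt_mul_of_pos_left _ (inv_pos.mpr hβ)
    linarith
  -- uniform bound for feasible functionals
  have hbd : ∀ a : Fin d → ℝ, (∀ w ∈ V, dot a (w - p₀) ≤ 1) → ∑ j, |a j| ≤ ε⁻¹ := by
    intro a hfeas
    have hfeasP : ∀ y ∈ P, dot a (y - p₀) ≤ 1 := by
      intro y hy
      rw [hdot_p]
      have := hull_dot_le (V := V) (u := a) (c := 1 + dot a p₀)
        (fun w hw => by linarith [hfeas w hw, hdot_p a w]) y (hPV ▸ hy)
      linarith
    set sgn : Fin d → ℝ := fun j => if 0 ≤ a j then 1 else -1 with hsgn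
    set y : Fin d → ℝ := p₀ + ε • sgn with hy
    have hyP : y ∈ P := by
      apply hcube
      intro j
      rw [hy]
      simp only [Pi.add_apply, Pi.smul_apply, smul_eq_mul, add_sub_cancel_left]
      rw [abs_mul, abs_of_nonneg hε.le]
      by_cases haj : 0 ≤ a j
      · simp [hsgn, haj]
      · simp [hsgn, haj]
    have h1 := hfeasP y hyP
    have h2 : y - p₀ = ε • sgn := by rw [hy]; abel
    rw [h2, dot_smul_right] at h1
    have h3 : dot a sgn = ∑ j, |a j| := by
      rw [dot]
      apply Finset.sum_congr rfl
      intro j _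
      simp only [hsgn]
      by_cases haj : 0 ≤ a j
      · rw [if_pos haj, abs_of_nonneg haj]; ring
      · push_neg at haj
        rw [if_neg (not_le.mpr haj), abs_of_neg haj]; ring
    rw [h3] at h1
    rw [← mul_le_mul_iff_right₀ hε]
    calc ε * ∑ j, |a j| ≤ 1 := h1
      _ = ε * ε⁻¹ := by rw [mul_inv_cancel₀ (ne_of_gt hε)]
  -- improve to a spanning active set
  obtain ⟨a, hfeas, hobj, hspan⟩ := active_improve V p₀ (x - p₀) ε⁻¹ hbd d a₀ hfeas₀ hobj₀
    (Nat.sub_le _ _)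
  -- extract d linearly independent active vertices
  obtain ⟨bset, hbsub, hbspan, hbli⟩ := exists_linearIndependent ℝ
    ((fun w => w - p₀) '' {w | w ∈ V ∧ dot a (w - p₀) = 1})
  rw [hspan] at hbspan
  have hbfin : bset.Finite := hbli.setFinite
  haveI : Fintype ↥bset := hbfin.fintype
  have hcard : bset.toFinset.card = d := by
    have h1 := finrank_span_set_eq_card (s := bset) hbli
    rw [hbspan] at h1
    rw [← h1, finrank_top, Module.finrank_pi, Fintype.card_fin]
  -- index bset by Fin d
  have e1 : Fin d ≃ ↥bset :=
    (finCongr hcard.symm).trans ((bset.toFinset.equivFin).symm.trans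
      (Equiv.subtypeEquivRight (fun x => Set.mem_toFinset)))
  set g : Fin d → (Fin d → ℝ) := fun i => ((e1 i : ↥bset) : Fin d → ℝ) with hg
  have hgli : LinearIndependent ℝ g := hbli.comp e1 e1.injective
  have hgS : ∀ i, g i ∈ ((fun w => w - p₀) '' {w | w ∈ V ∧ dot a (w - p₀) = 1}) := by
    intro i
    exact hbsub (e1 i).2
  have hchoice : ∀ i, ∃ w, w ∈ V ∧ dot a (w - p₀) = 1 ∧ w - p₀ = g i := by
    intro i
    obtain ⟨w, ⟨hwV, hwact⟩, hwe⟩ := hgS i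
    exact ⟨w, hwV, hwact, hwe⟩
  choose vv hv1 hv2 hv3 using hchoice
  have hvli : LinearIndependent ℝ (fun i => vv i - p₀) := by
    have : (fun i => vv i - p₀) = g := funext hv3
    rw [this]
    exact hgli
  -- global feasibility over P
  have hfeasP : ∀ y ∈ P, dot a (y - p₀) ≤ 1 := by
    intro y hy
    rw [hdot_p]
    have := hull_dot_le (V := V) (u := a) (c := 1 + dot a p₀)
      (fun w hw => by linarith [hfeas w hw, hdot_p a w]) y (hPV ▸ hy)
    linarith
  set c₀ : ℝ := 1 + dot a p₀ with hc₀
  have hc₀nn : 0 ≤ c₀ := by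
    have := hfeasP 0 h0
    rw [hdot_p, dot_zero_right] at this
    rw [hc₀]
    linarith
  rcases eq_or_lt_of_le hc₀nn with hc0 | hcpos
  · -- c₀ = 0
    refine ⟨a, 0, vv, ?_, ?_, Or.inl rfl, hv1, hvli, ?_⟩
    · intro y hy
      have := hfeasP y hy
      rw [hdot_p] at this
      rw [hc₀] at hc0
      linarith
    · have := hobj
      rw [hdot_p] at this
      rw [hc₀] at hc0
      linarith
    · intro i
      have := hv2 i
      rw [hdot_p] at this
      rw [hc₀] at hc0
      linarith
  · -- c₀ > 0
    refine ⟨c₀⁻¹ • a, 1, vv, ?_, ?_, Or.inr rfl, hv1, hvli, ?_⟩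
    · intro y hy
      rw [dot_smul_left]
      have h1 := hfeasP y hy
      rw [hdot_p] at h1
      have h2 : dot a y ≤ c₀ := by rw [hc₀]; linarith
      calc c₀⁻¹ * dot a y ≤ c₀⁻¹ * c₀ := mul_le_mul_of_nonneg_left h2 (inv_nonneg.mpr hc₀nn)
        _ = 1 := inv_mul_cancel₀ (ne_of_gt hcpos)
    · rw [dot_smul_left]
      have h1 := hobj
      rw [hdot_p] at h1
      have h2 : c₀ < dot a x := by rw [hc₀]; linarith
      calc (1:ℝ) = c₀⁻¹ * c₀ := (inv_mul_cancel₀ (ne_of_gt hcpos)).symm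
        _ < c₀⁻¹ * dot a x := mul_lt_mul_of_pos_left h2 (inv_pos.mpr hcpos)
    · intro i
      rw [dot_smul_left]
      have := hv2 i
      rw [hdot_p] at this
      have h2 : dot a (vv i) = c₀ := by rw [hc₀]; linarith
      rw [h2, inv_mul_cancel₀ (ne_of_gt hcpos)]

/-- A halfspace containing `P` whose boundary contains the affine frame
`v` is uniquely determined. -/
lemma halfspaces_eq {P : Set (Fin d → ℝ)} (p₀ : Fin d → ℝ) (ε : ℝ) (hε : 0 < ε)
    (hcube : ∀ y : Fin d → ℝ, (∀ j, |y j - p₀ j| ≤ ε) → y ∈ P)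
    (hd : 0 < d)
    (v : Fin d → (Fin d → ℝ)) (hvli : LinearIndependent ℝ (fun i => v i - p₀))
    (u₁ u₂ : Fin d → ℝ) (c₁ c₂ : ℝ)
    (hP1 : ∀ y ∈ P, dot u₁ y ≤ c₁) (hP2 : ∀ y ∈ P, dot u₂ y ≤ c₂)
    (hv1 : ∀ i, dot u₁ (v i) = c₁) (hv2 : ∀ i, dot u₂ (v i) = c₂)
    (hu1 : u₁ ≠ 0) (hu2 : u₂ ≠ 0) :
    {x : Fin d → ℝ | dot u₁ x ≤ c₁} = {x : Fin d → ℝ | dot u₂ x ≤ c₂} := by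
  haveI : Nonempty (Fin d) := ⟨⟨0, hd⟩⟩
  have card_eq : Fintype.card (Fin d) = Module.finrank ℝ (Fin d → ℝ) := by
    rw [Module.finrank_pi]
  set bb := basisOfLinearIndependentOfCardEqFinrank hvli card_eq with hbbdef
  have hbb : ⇑bb = fun i => v i - p₀ := coe_basisOfLinearIndependentOfCardEqFinrank hvli card_eq
  set sfun : (Fin d → ℝ) → ℝ := fun x => ∑ i, bb.equivFun x i with hsfun
  -- every functional vanishing-normalized on the frame is proportional to sfun
  have main : ∀ (u : Fin d → ℝ) (c : ℝ), (∀ i, dot u (v i) = c) →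
      ∀ x : Fin d → ℝ, dot u x = (c - dot u p₀) * sfun x := by
    intro u c hv x
    have hrep : ∑ i, bb.equivFun x i • (v i - p₀) = x := by
      have := Module.Basis.sum_equivFun bb x
      rwa [hbb] at this
    calc dot u x = dot u (∑ i, bb.equivFun x i • (v i - p₀)) := by rw [hrep]
      _ = ∑ i, bb.equivFun x i * dot u (v i - p₀) := dot_sum_right u _ _ _
      _ = ∑ i, bb.equivFun x i * (c - dot u p₀) := by
          apply Finset.sum_congr rfl
          intro i _
          rw [dot_sub_right, hv i]
      _ = (c - dot u p₀) * sfun x := by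
          simp only [hsfun, Finset.mul_sum]
          apply Finset.sum_congr rfl
          intro i _
          ring
  -- the margin `c - dot u p₀` is strictly positive
  have margin : ∀ (u : Fin d → ℝ) (c : ℝ), (∀ y ∈ P, dot u y ≤ c) → u ≠ 0 →
      0 < c - dot u p₀ := by
    intro u c hP hu
    set sg : Fin d → ℝ := fun j => if 0 ≤ u j then 1 else -1 with hsg
    have hyP : p₀ + ε • sg ∈ P := by
      apply hcube
      intro j
      simp only [Pi.add_apply, Pi.smul_apply, smul_eq_mul, add_sub_cancel_left]
      rw [abs_mul, abs_of_nonneg hε.le]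
      by_cases haj : 0 ≤ u j
      · simp [hsg, haj]
      · simp [hsg, haj]
    have h1 := hP _ hyP
    rw [dot_add_right, dot_smul_right] at h1
    have h3 : dot u sg = ∑ j, |u j| := by
      rw [dot]
      apply Finset.sum_congr rfl
      intro j _
      simp only [hsg]
      by_cases haj : 0 ≤ u j
      · rw [if_pos haj, abs_of_nonneg haj]; ring
      · push_neg at haj
        rw [if_neg (not_le.mpr haj), abs_of_neg haj]; ring
    rw [h3] at h1
    have h4 : 0 < ∑ j, |u j| := by
      obtain ⟨j₀, hj₀⟩ := Function.ne_iff.mp hu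
      rw [Pi.zero_apply] at hj₀
      have : 0 < |u j₀| := abs_pos.mpr hj₀
      have hle : |u j₀| ≤ ∑ j, |u j| := Finset.single_le_sum (f := fun j => |u j|)
        (fun _ _ => abs_nonneg _) (Finset.mem_univ j₀)
      linarith
    nlinarith
  have hm1 := margin u₁ c₁ hP1 hu1
  have hm2 := margin u₂ c₂ hP2 hu2
  -- the common threshold
  have hth : sfun (v ⟨0, hd⟩) * (c₁ - dot u₁ p₀) = c₁ := by
    have := main u₁ c₁ hv1 (v ⟨0, hd⟩)
    rw [hv1 ⟨0, hd⟩] at this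
    linarith [this]
  have hth2 : sfun (v ⟨0, hd⟩) * (c₂ - dot u₂ p₀) = c₂ := by
    have := main u₂ c₂ hv2 (v ⟨0, hd⟩)
    rw [hv2 ⟨0, hd⟩] at this
    linarith [this]
  ext x
  simp only [Set.mem_setOf_eq]
  rw [main u₁ c₁ hv1 x, main u₂ c₂ hv2 x]
  constructor
  · intro h
    have hs : sfun x ≤ sfun (v ⟨0, hd⟩) := by
      nlinarith
    nlinarith
  · intro h
    have hs : sfun x ≤ sfun (v ⟨0, hd⟩) := by
      nlinarith
    nlinarith

lemma linIndep_of_frame (p₀ : Fin d → ℝ) (v : Fin d → (Fin d → ℝ))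
    (hvli : LinearIndependent ℝ (fun i => v i - p₀)) (u : Fin d → ℝ) (c : ℝ)
    (hc : c ≠ 0) (hv : ∀ i, dot u (v i) = c) : LinearIndependent ℝ v := by
  rw [linearIndependent_iff']
  intro s f hsum i hi
  have h1 : dot u (∑ i ∈ s, f i • v i) = ∑ i ∈ s, f i * c := by
    rw [dot_sum_right]
    exact Finset.sum_congr rfl fun i _ => by rw [hv i]
  rw [hsum, dot_zero_right] at h1
  have h2 : (∑ i ∈ s, f i) * c = 0 := by rw [Finset.sum_mul]; exact h1.symm
  have h3 : ∑ i ∈ s, f i = 0 := by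
    rcases mul_eq_zero.mp h2 with h | h
    · exact h
    · exact absurd h hc
  have h4 : ∑ i ∈ s, f i • (v i - p₀) = 0 := by
    have : ∀ i ∈ s, f i • (v i - p₀) = f i • v i - f i • p₀ :=
      fun i _ => smul_sub _ _ _
    rw [Finset.sum_congr rfl this, Finset.sum_sub_distrib, hsum, ← Finset.sum_smul, h3,
      zero_smul, sub_zero]
  exact linearIndependent_iff'.mp hvli s f h4 i hi

end Stmt5Aux

open Stmt5Aux in
theorem stmt5 {d : ℕ} (P : Set (Fin d → ℝ))
    (hpoly : ∃ V : Finset (Fin d → ℝ), P = convexHull ℝ (V : Set (Fin d → ℝ)))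
    (hint : (interior P).Nonempty)
    (hL : ∀ s : ℝ, 0 ≤ s →
      latticeCount (s • P) = latticeCount ((⌊s⌋ : ℝ) • P)) :
    ∃ (n : ℕ) (a : Fin n → (Fin d → ℝ)) (b : Fin n → ℝ),
      P = ⋂ i, {x : Fin d → ℝ | ∑ j, a i j * x j ≤ b i} ∧
      (∀ i, b i = 0 ∨ b i = 1) ∧
      (∀ i, b i = 1 → ∃ a' : Fin d → ℤ, a i = fun j => (a' j : ℝ)) := by
  classical
  obtain ⟨V, hPV⟩ := hpoly
  obtain ⟨q₀, hq₀⟩ := hint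
  have hPne : P.Nonempty := ⟨q₀, interior_subset hq₀⟩
  rcases Nat.eq_zero_or_pos d with hd0 | hd
  · subst hd0
    refine ⟨0, fun i => i.elim0, fun i => i.elim0, ?_, fun i => i.elim0, fun i => i.elim0⟩
    have hU : P = Set.univ := by
      apply Set.eq_univ_of_forall
      intro y
      have : y = q₀ := funext fun i => i.elim0
      rw [this]; exact interior_subset hq₀
    rw [hU, Set.iInter_of_empty]
  · have hconv : Convex ℝ P := hPV ▸ convex_convexHull ℝ _
    have h0 : (0 : Fin d → ℝ) ∈ P := zero_mem_P hPV hPne hL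
    have hfloor : ∀ t : ℝ, 0 ≤ t → ∀ z : Fin d → ℤ, (fun i => (z i : ℝ)) ∈ t • P →
        (fun i => (z i : ℝ)) ∈ ((⌊t⌋ : ℤ) : ℝ) • P :=
      fun t ht => lattice_floor hPV hL hconv h0 ht
    have hVP : ∀ w ∈ V, w ∈ P := fun w hw => hPV ▸ subset_convexHull ℝ _ hw
    rw [mem_interior_iff_mem_nhds, Metric.mem_nhds_iff] at hq₀
    obtain ⟨ε', hε', hball⟩ := hq₀
    have hε : 0 < ε'/2 := by positivity
    have hcube : ∀ y : Fin d → ℝ, (∀ j, |y j - q₀ j| ≤ ε'/2) → y ∈ P := by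
      intro y hy
      apply hball
      rw [Metric.mem_ball]
      have hdy : dist y q₀ ≤ ε'/2 := by
        rw [dist_pi_le_iff hε.le]
        intro j; rw [Real.dist_eq]; exact hy j
      linarith
    set 𝒮 : Set (Set (Fin d → ℝ)) := {S | ∃ (u : Fin d → ℝ) (c : ℝ) (v : Fin d → (Fin d → ℝ)),
      S = {x | dot u x ≤ c} ∧ (∀ y ∈ P, dot u y ≤ c) ∧ (c = 0 ∨ c = 1) ∧
      (c = 1 → ∃ a' : Fin d → ℤ, u = fun j => (a' j : ℝ)) ∧
      (∀ i, v i ∈ V) ∧ LinearIndependent ℝ (fun i => v i - q₀) ∧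
      (∀ i, dot u (v i) = c) ∧ u ≠ 0} with h𝒮
    have hPint : P = ⋂₀ 𝒮 := by
      apply Set.Subset.antisymm
      · intro y hy S hS
        obtain ⟨u, c, v, rfl, hPu, -, -, -, -, -, -⟩ := hS
        exact hPu y hy
      · intro x hxI
        by_contra hx
        obtain ⟨u, c, v, hPu, hcx, hc01, hvV, hvli, hvc⟩ :=
          separation hPV q₀ (ε'/2) hε hcube h0 hd hx
        have hune : u ≠ 0 := by
          intro h0u
          rw [h0u, dot_zero_left] at hcx
          rcases hc01 with rfl | rfl <;> linarith
        have hS : {x' : Fin d → ℝ | dot u x' ≤ c} ∈ 𝒮 := by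
          refine ⟨u, c, v, rfl, hPu, hc01, ?_, hvV, hvli, hvc, hune⟩
          intro hc1
          subst hc1
          exact dot_integral hconv hPne hfloor u hPu v (fun i => hVP _ (hvV i)) hvc
            (linIndep_of_frame q₀ v hvli u 1 one_ne_zero hvc) hd
        have := hxI _ hS
        rw [Set.mem_setOf_eq] at this
        linarith
    have hfin : 𝒮.Finite := by
      have h𝒮sub : 𝒮 ⊆ ⋃ v ∈ {v : Fin d → (Fin d → ℝ) |
          (∀ i, v i ∈ V) ∧ LinearIndependent ℝ (fun i => v i - q₀)},
          {S : Set (Fin d → ℝ) | ∃ (u : Fin d → ℝ) (c : ℝ), S = {x | dot u x ≤ c} ∧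
            (∀ y ∈ P, dot u y ≤ c) ∧ (∀ i, dot u (v i) = c) ∧ u ≠ 0} := by
        intro S hS
        obtain ⟨u, c, v, h1, h2, -, -, h5, h6, h7, h8⟩ := hS
        exact Set.mem_biUnion ⟨h5, h6⟩ ⟨u, c, h1, h2, h7, h8⟩
      apply Set.Finite.subset _ h𝒮sub
      apply Set.Finite.biUnion
      · apply Set.Finite.subset (Set.Finite.pi (fun _ : Fin d => V.finite_toSet))
        intro v hv
        rw [Set.mem_pi]
        exact fun i _ => hv.1 i
      · intro v hv
        apply Set.Subsingleton.finite
        intro S1 hS1 S2 hS2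
        obtain ⟨u₁, c₁, rfl, hP1, hv1, hu1⟩ := hS1
        obtain ⟨u₂, c₂, rfl, hP2, hv2, hu2⟩ := hS2
        exact halfspaces_eq q₀ (ε'/2) hε hcube hd v hv.2 u₁ u₂ c₁ c₂ hP1 hP2 hv1 hv2 hu1 hu2
    set F : Finset (Set (Fin d → ℝ)) := hfin.toFinset with hF
    have hmem : ∀ i : Fin F.card, ((F.equivFin.symm i : ↥F) : Set (Fin d → ℝ)) ∈ 𝒮 := by
      intro i
      have h1 := (F.equivFin.symm i).2
      exact (Set.Finite.mem_toFinset hfin).mp h1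
    choose u c v hSeq hPu hc01 hcint hvV hvli hvc hune using hmem
    refine ⟨F.card, u, c, ?_, hc01, hcint⟩
    ext y
    simp only [Set.mem_iInter, Set.mem_setOf_eq]
    constructor
    · intro hy i
      exact hPu i y hy
    · intro hy
      rw [hPint]
      intro S hS
      have hSF : S ∈ F := (Set.Finite.mem_toFinset hfin).mpr hS
      have h2 : ((F.equivFin.symm (F.equivFin ⟨S, hSF⟩) : ↥F) : Set (Fin d → ℝ)) = S := by
        rw [Equiv.symm_apply_apply]
      have h3 := hSeq (F.equivFin ⟨S, hSF⟩)
      rw [h2] at h3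
      rw [h3]
      exact hy (F.equivFin ⟨S, hSF⟩)
end

section
/- Let ≺ be a strict partial order on {1,…,d} and let O(≺) = {x ∈ ℝ^d : 0 ≤ x_i ≤ 1 for all i, and x_i ≤ x_j whenever i ≺ j} be the order polytope. Then O(≺) is semi-reflexive: #(sO(≺) ∩ ℤ^d) = #(⌊s⌋O(≺) ∩ ℤ^d) for all real s ≥ 0. -/
open Pointwise

lemma key_set {d : ℕ} (r : Fin d → Fin d → Prop)
    (P : Set (Fin d → ℝ))
    (hP : P = {x : Fin d → ℝ |
      (∀ i, 0 ≤ x i ∧ x i ≤ 1) ∧ ∀ i j, r i j → x i ≤ x j})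
    (s : ℝ) (hs : 0 ≤ s) :
    {x : Fin d → ℤ | (fun i => (x i : ℝ)) ∈ s • P} =
    {x : Fin d → ℤ | (∀ i, 0 ≤ x i ∧ x i ≤ ⌊s⌋) ∧ ∀ i j, r i j → x i ≤ x j} := by
  rcases eq_or_lt_of_le hs with h0 | h0
  · have hzero : (0 : Fin d → ℝ) ∈ P := by
      subst hP
      refine ⟨fun i => ⟨le_refl _, zero_le_one⟩, fun i j _ => le_refl _⟩
    have hne : P.Nonempty := ⟨0, hzero⟩
    rw [← h0, Set.zero_smul_set hne]
    ext x
    simp only [Set.mem_setOf_eq, Int.floor_zero, Set.mem_zero]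
    constructor
    · intro h
      have hx : ∀ i, (x i : ℝ) = 0 := fun i => congrFun h i
      have hx' : ∀ i, x i = 0 := fun i => by exact_mod_cast hx i
      exact ⟨fun i => ⟨le_of_eq (hx' i).symm, le_of_eq (hx' i)⟩,
        fun i j _ => by rw [hx' i, hx' j]⟩
    · rintro ⟨h1, _⟩
      funext i
      have : x i = 0 := le_antisymm (h1 i).2 (h1 i).1
      simp [this]
  · ext x
    simp only [Set.mem_setOf_eq]
    rw [Set.mem_smul_set_iff_inv_smul_mem₀ (ne_of_gt h0)]
    subst hP
    simp only [Set.mem_setOf_eq, Pi.smul_apply, smul_eq_mul]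
    have hinv : 0 < s⁻¹ := inv_pos.mpr h0
    constructor
    · rintro ⟨h1, h2⟩
      refine ⟨fun i => ?_, fun i j hij => ?_⟩
      · obtain ⟨ha, hb⟩ := h1 i
        constructor
        · have : (0 : ℝ) ≤ x i := nonneg_of_mul_nonneg_right ha hinv
          exact_mod_cast this
        · rw [Int.le_floor]
          have := (inv_mul_le_iff₀ h0).mp hb
          simpa using this
      · have := h2 i j hij
        have := (mul_le_mul_iff_right₀ hinv).mp this
        exact_mod_cast this
    · rintro ⟨h1, h2⟩
      refine ⟨fun i => ?_, fun i j hij => ?_⟩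
      · obtain ⟨ha, hb⟩ := h1 i
        have ha' : (0 : ℝ) ≤ (x i : ℝ) := by exact_mod_cast ha
        have hb' : (x i : ℝ) ≤ s := Int.le_floor.mp hb
        constructor
        · positivity
        · rw [inv_mul_le_iff₀ h0]
          simpa using hb'
      · have : (x i : ℝ) ≤ (x j : ℝ) := by exact_mod_cast h2 i j hij
        exact mul_le_mul_of_nonneg_left this (le_of_lt hinv)

theorem stmt10 {d : ℕ} (r : Fin d → Fin d → Prop)
    (hirr : ∀ i, ¬ r i i) (htrans : ∀ i j k, r i j → r j k → r i k)
    (P : Set (Fin d → ℝ))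
    (hP : P = {x : Fin d → ℝ |
      (∀ i, 0 ≤ x i ∧ x i ≤ 1) ∧ ∀ i j, r i j → x i ≤ x j}) :
    ∀ s : ℝ, 0 ≤ s →
      latticeCount (s • P) = latticeCount ((⌊s⌋ : ℝ) • P) := by
  intro s hs
  have hfs : (0 : ℝ) ≤ (⌊s⌋ : ℝ) := by exact_mod_cast Int.floor_nonneg.mpr hs
  unfold latticeCount
  rw [key_set r P hP s hs, key_set r P hP (⌊s⌋ : ℝ) hfs, Int.floor_intCast]
end

section
/- Let P be a full-dimensional polytope written as P = {x : ⟨a_i, x⟩ ≤ b_i, i = 1,…,n} where each b_i ∈ {0,1} and a_i ∈ ℤ^d when b_i = 1. Then the interior P° satisfies L_{P°}(s) = L_{P°}(⌈s⌉) for all real s ≥ 0. -/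
open Pointwise

lemma interior_halfspace_aux {d : ℕ} (c : Fin d → ℝ) (b : ℝ) (hb : 0 ≤ b) :
    interior {x : Fin d → ℝ | ∑ j, c j * x j ≤ b} =
      {x : Fin d → ℝ | c = 0 ∨ ∑ j, c j * x j < b} := by
  by_cases hc : c = 0
  · subst hc
    simp [hb]
  · set f : (Fin d → ℝ) →L[ℝ] ℝ := ∑ j, c j • ContinuousLinearMap.proj j with hf
    have hfx : ∀ x, f x = ∑ j, c j * x j := by
      intro x
      simp [hf, ContinuousLinearMap.sum_apply]
    have hfne : f ≠ 0 := by
      obtain ⟨j, hj⟩ : ∃ j, c j ≠ 0 := by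
        by_contra h
        push_neg at h
        exact hc (funext h)
      intro h0
      have := hfx (Pi.single j 1)
      rw [h0] at this
      simp only [ContinuousLinearMap.zero_apply] at this
      have : (0 : ℝ) = c j := by
        rw [this, Finset.sum_eq_single j]
        · simp
        · intro k _ hk; simp [Pi.single_eq_of_ne hk]
        · simp
      exact hj this.symm
    have hopen : IsOpenMap f := f.isOpenMap_of_ne_zero hfne
    have : {x : Fin d → ℝ | ∑ j, c j * x j ≤ b} = f ⁻¹' Set.Iic b := by
      ext x; simp [hfx]
    rw [this, ← hopen.preimage_interior_eq_interior_preimage f.continuous, interior_Iic]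
    ext x; simp [hfx, hc]

theorem stmt11 {d n : ℕ} (a : Fin n → (Fin d → ℝ)) (b : Fin n → ℝ)
    (P : Set (Fin d → ℝ))
    (hP : P = ⋂ i, {x : Fin d → ℝ | ∑ j, a i j * x j ≤ b i})
    (hcompact : IsCompact P) (hint : (interior P).Nonempty)
    (hb : ∀ i, b i = 0 ∨ b i = 1)
    (ha : ∀ i, b i = 1 → ∃ a' : Fin d → ℤ, a i = fun j => (a' j : ℝ)) :
    ∀ s : ℝ, 0 < s →
      latticeCount (s • interior P) = latticeCount ((⌈s⌉ : ℝ) • interior P) := by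
  intro s hs
  have hmem : ∀ x : Fin d → ℝ, x ∈ interior P ↔
      ∀ i, a i = 0 ∨ ∑ j, a i j * x j < b i := by
    intro x
    rw [hP, interior_iInter_of_finite]
    simp only [Set.mem_iInter]
    refine forall_congr' fun i => ?_
    have hbi : 0 ≤ b i := by rcases hb i with h | h <;> rw [h] <;> norm_num
    rw [interior_halfspace_aux (a i) (b i) hbi]
    rfl
  -- characterization of t • interior P for t > 0
  have hsmul : ∀ (t : ℝ), 0 < t → ∀ x : Fin d → ℝ,
      x ∈ t • interior P ↔ ∀ i, a i = 0 ∨ ∑ j, a i j * x j < t * b i := by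
    intro t ht x
    rw [Set.mem_smul_set_iff_inv_smul_mem₀ (ne_of_gt ht), hmem]
    refine forall_congr' fun i => or_congr_right ?_
    have : ∑ j, a i j * (t⁻¹ • x) j = t⁻¹ * ∑ j, a i j * x j := by
      rw [Finset.mul_sum]
      refine Finset.sum_congr rfl fun j _ => ?_
      simp [Pi.smul_apply, smul_eq_mul]; ring
    rw [this, inv_mul_lt_iff₀ ht]
  have hceil : (0 : ℝ) < (⌈s⌉ : ℤ) := by
    exact_mod_cast Int.cast_pos.mpr (Int.ceil_pos.mpr hs)
  have hset : {x : Fin d → ℤ | (fun i => (x i : ℝ)) ∈ s • interior P} =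
      {x : Fin d → ℤ | (fun i => (x i : ℝ)) ∈ ((⌈s⌉ : ℝ)) • interior P} := by
    ext x
    simp only [Set.mem_setOf_eq, hsmul s hs, hsmul _ hceil]
    refine forall_congr' fun i => or_congr_right ?_
    rcases hb i with h0 | h1
    · rw [h0]; simp
    · rw [h1, mul_one, mul_one]
      obtain ⟨a', ha'⟩ := ha i h1
      have : ∑ j, a i j * (x j : ℝ) = ((∑ j, a' j * x j : ℤ) : ℝ) := by
        rw [ha']
        push_cast
        rfl
      rw [this]
      constructor
      · intro h
        exact_mod_cast Int.lt_ceil.mpr h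
      · intro h
        exact Int.lt_ceil.mp (by exact_mod_cast h)
  unfold latticeCount
  rw [hset]
end

section
/- Let P ⊆ ℝ^d be a full-dimensional polytope containing the origin in its interior. Then L_P(s) = L_P(⌊s⌋) for all real s ≥ 0 if and only if L_{P°}(s) = L_{P°}(⌈s⌉) for all real s ≥ 0, where P° is the interior of P. -/
open Pointwise

lemma finite_lattice_aux {d : ℕ} {S : Set (Fin d → ℝ)} (hS : Bornology.IsBounded S) :
    {x : Fin d → ℤ | (fun i => (x i : ℝ)) ∈ S}.Finite := by
  obtain ⟨R, hR⟩ := hS.subset_closedBall 0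
  refine (Set.Finite.pi (fun _ : Fin d => Set.finite_Icc (-⌈R⌉) ⌈R⌉)).subset ?_
  intro x hx
  have hx' := hR hx
  rw [Metric.mem_closedBall, dist_zero_right] at hx'
  intro i _
  have h1 : |(x i : ℝ)| ≤ R := by
    calc |(x i : ℝ)| = ‖(fun i => (x i : ℝ)) i‖ := by simp
    _ ≤ ‖(fun j => (x j : ℝ))‖ := norm_le_pi_norm (fun j => (x j : ℝ)) i
    _ ≤ R := hx'
  have h2 : (|x i| : ℝ) ≤ (⌈R⌉ : ℝ) := by
    exact h1.trans (Int.le_ceil R)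
  have h3 : |x i| ≤ ⌈R⌉ := by exact_mod_cast h2
  exact Set.mem_Icc.mpr (abs_le.mp h3)

theorem stmt12 {d : ℕ} (P : Set (Fin d → ℝ))
    (hpoly : ∃ V : Finset (Fin d → ℝ), P = convexHull ℝ (V : Set (Fin d → ℝ)))
    (h0 : (0 : Fin d → ℝ) ∈ interior P) :
    (∀ s : ℝ, 0 ≤ s →
        latticeCount (s • P) = latticeCount ((⌊s⌋ : ℝ) • P)) ↔
      (∀ s : ℝ, 0 ≤ s →
        latticeCount (s • interior P) = latticeCount ((⌈s⌉ : ℝ) • interior P)) := by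
  obtain ⟨V, rfl⟩ := hpoly
  set P := convexHull ℝ (V : Set (Fin d → ℝ)) with hP
  have hconv : Convex ℝ P := convex_convexHull ℝ _
  have hcomp : IsCompact P := V.finite_toSet.isCompact_convexHull ℝ
  have hcl : IsClosed P := hcomp.isClosed
  have hbd : Bornology.IsBounded P := hcomp.isBounded
  have hnhds : P ∈ nhds 0 := mem_interior_iff_mem_nhds.mp h0
  have habs : Absorbent ℝ P := absorbent_nhds_zero hnhds
  have hvnb : Bornology.IsVonNBounded ℝ P := (NormedSpace.isVonNBounded_iff ℝ).mpr hbd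
  set ρ : (Fin d → ℤ) → ℝ := fun x => gauge P (fun i => (x i : ℝ)) with hρ
  have hρ0 : ∀ x : Fin d → ℤ, ρ x = 0 ↔ x = 0 := by
    intro x
    rw [hρ, gauge_eq_zero habs hvnb]
    constructor
    · intro h; ext i
      have := congrFun h i; norm_num at this; exact_mod_cast this
    · rintro rfl; funext i; simp
  -- membership characterizations for s > 0
  have memP : ∀ {s : ℝ}, 0 < s → ∀ x : Fin d → ℤ,
      ((fun i => (x i : ℝ)) ∈ s • P ↔ ρ x ≤ s) := by
    intro s hs x
    rw [Set.mem_smul_set_iff_inv_smul_mem₀ hs.ne']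
    have : s⁻¹ • (fun i => (x i : ℝ)) ∈ P ↔ gauge P (s⁻¹ • fun i => (x i : ℝ)) ≤ 1 := by
      rw [gauge_le_one_iff_mem_closure hconv hnhds, hcl.closure_eq]
    rw [this, gauge_smul_of_nonneg (inv_nonneg.mpr hs.le), smul_eq_mul,
      inv_mul_le_iff₀ hs, mul_one]
  have memInt : ∀ {s : ℝ}, 0 < s → ∀ x : Fin d → ℤ,
      ((fun i => (x i : ℝ)) ∈ s • interior P ↔ ρ x < s) := by
    intro s hs x
    rw [Set.mem_smul_set_iff_inv_smul_mem₀ hs.ne',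
      ← gauge_lt_one_iff_mem_interior hconv hnhds,
      gauge_smul_of_nonneg (inv_nonneg.mpr hs.le), smul_eq_mul,
      inv_mul_lt_iff₀ hs, mul_one]
  -- uniform description for closed case, s ≥ 0
  have setP : ∀ {s : ℝ}, 0 ≤ s →
      {x : Fin d → ℤ | (fun i => (x i : ℝ)) ∈ s • P} = {x : Fin d → ℤ | ρ x ≤ s} := by
    intro s hs
    rcases hs.lt_or_eq with h | h
    · ext x; exact memP h x
    · subst h
      have hPne : P.Nonempty := ⟨0, interior_subset h0⟩
      rw [Set.zero_smul_set hPne]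
      ext x
      simp only [Set.mem_setOf_eq, Set.mem_singleton_iff]
      constructor
      · intro hx
        have : x = 0 := by
          ext i
          have := congrFun hx i; norm_num at this; exact_mod_cast this
        subst this
        simp [hρ0]
        exact le_of_eq ((hρ0 0).mpr rfl)
      · intro hx
        have : ρ x = 0 := le_antisymm hx (gauge_nonneg _)
        have : x = 0 := (hρ0 x).mp this
        subst this
        funext i; simp
  have finP : ∀ s : ℝ, {x : Fin d → ℤ | ρ x ≤ s}.Finite := by
    intro s
    rcases le_or_gt 0 s with hs | hs
    · rw [← setP hs]
      exact finite_lattice_aux (hbd.smul₀ s)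
    · have : {x : Fin d → ℤ | ρ x ≤ s} = ∅ := by
        ext x; simp only [Set.mem_setOf_eq, Set.mem_empty_iff_false, iff_false, not_le]
        exact hs.trans_le (gauge_nonneg _)
      rw [this]; exact Set.finite_empty
  -- the common condition
  have key : ((∀ s : ℝ, 0 ≤ s →
        latticeCount (s • P) = latticeCount ((⌊s⌋ : ℝ) • P)) ↔
      (∀ x : Fin d → ℤ, ∃ n : ℤ, ρ x = n)) := by
    constructor
    · intro hA x
      by_contra hc
      push_neg at hc
      set r := ρ x with hr
      have hr0 : 0 ≤ r := gauge_nonneg _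
      have hfl : (⌊r⌋ : ℝ) < r := by
        rcases lt_or_eq_of_le (Int.floor_le r) with h | h
        · exact h
        · exact absurd h.symm (hc ⌊r⌋)
      have := hA r hr0
      rw [latticeCount, latticeCount, setP hr0,
        setP (by positivity : (0:ℝ) ≤ (⌊r⌋ : ℝ))] at this
      have hsub : {y : Fin d → ℤ | ρ y ≤ (⌊r⌋ : ℝ)} ⊆ {y : Fin d → ℤ | ρ y ≤ r} :=
        fun y hy => le_trans hy (Int.floor_le r)
      have heq := Set.eq_of_subset_of_ncard_le hsub this.le (finP r)
      have hx : x ∈ {y : Fin d → ℤ | ρ y ≤ r} := le_refl r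
      rw [← heq] at hx
      exact absurd (lt_of_lt_of_le hfl hx) (lt_irrefl _)
    · intro hC s hs
      have hfl0 : (0:ℝ) ≤ (⌊s⌋ : ℝ) := by
        have : (0:ℤ) ≤ ⌊s⌋ := Int.floor_nonneg.mpr hs
        exact_mod_cast this
      rw [latticeCount, latticeCount, setP hs, setP hfl0]
      congr 1
      ext x
      simp only [Set.mem_setOf_eq]
      constructor
      · intro hx
        obtain ⟨n, hn⟩ := hC x
        rw [hn] at hx ⊢
        exact_mod_cast Int.le_floor.mpr hx
      · intro hx
        exact hx.trans (Int.floor_le s)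
  have key2 : ((∀ s : ℝ, 0 ≤ s →
        latticeCount (s • interior P) = latticeCount ((⌈s⌉ : ℝ) • interior P)) ↔
      (∀ x : Fin d → ℤ, ∃ n : ℤ, ρ x = n)) := by
    constructor
    · intro hB x
      by_contra hc
      push_neg at hc
      set r := ρ x with hr
      have hr0 : 0 < r := by
        rcases (gauge_nonneg _ : 0 ≤ r).lt_or_eq with h | h
        · exact h
        · exact absurd h.symm (by simpa using hc 0)
      have hcl' : r < (⌈r⌉ : ℝ) := by
        rcases lt_or_eq_of_le (Int.le_ceil r) with h | h
        · exact h
        · exact absurd h (hc ⌈r⌉)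
      have hceil_pos : (0:ℝ) < (⌈r⌉ : ℝ) := hr0.trans hcl'
      have := hB r hr0.le
      have hS1 : {y : Fin d → ℤ | (fun i => (y i : ℝ)) ∈ r • interior P}
          = {y : Fin d → ℤ | ρ y < r} := by ext y; exact memInt hr0 y
      have hS2 : {y : Fin d → ℤ | (fun i => (y i : ℝ)) ∈ (⌈r⌉:ℝ) • interior P}
          = {y : Fin d → ℤ | ρ y < (⌈r⌉:ℝ)} := by ext y; exact memInt hceil_pos y
      rw [latticeCount, latticeCount, hS1, hS2] at this
      have hsub : {y : Fin d → ℤ | ρ y < r} ⊆ {y : Fin d → ℤ | ρ y < (⌈r⌉:ℝ)} :=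
        fun y hy => lt_of_lt_of_le hy (Int.le_ceil r)
      have hfin : {y : Fin d → ℤ | ρ y < (⌈r⌉:ℝ)}.Finite :=
        (finP (⌈r⌉:ℝ)).subset (fun y hy => show ρ y ≤ _ from le_of_lt hy)
      have heq := Set.eq_of_subset_of_ncard_le hsub this.ge hfin
      have hx : x ∈ {y : Fin d → ℤ | ρ y < (⌈r⌉:ℝ)} := hcl'
      rw [← heq] at hx
      exact absurd hx (lt_irrefl r)
    · intro hC s hs
      rcases hs.lt_or_eq with hs' | hs'
      · have hceil_pos : (0:ℝ) < (⌈s⌉ : ℝ) := by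
          have : (0:ℤ) < ⌈s⌉ := Int.ceil_pos.mpr hs'
          exact_mod_cast this
        have hS1 : {y : Fin d → ℤ | (fun i => (y i : ℝ)) ∈ s • interior P}
            = {y : Fin d → ℤ | ρ y < s} := by ext y; exact memInt hs' y
        have hS2 : {y : Fin d → ℤ | (fun i => (y i : ℝ)) ∈ (⌈s⌉:ℝ) • interior P}
            = {y : Fin d → ℤ | ρ y < (⌈s⌉:ℝ)} := by ext y; exact memInt hceil_pos y
        rw [latticeCount, latticeCount, hS1, hS2]
        congr 1
        ext x
        simp only [Set.mem_setOf_eq]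
        constructor
        · intro hx
          exact lt_of_lt_of_le hx (Int.le_ceil s)
        · intro hx
          obtain ⟨n, hn⟩ := hC x
          rw [hn] at hx ⊢
          exact Int.lt_ceil.mp (by exact_mod_cast hx)
      · subst hs'
        norm_num
  exact key.trans key2.symm
end
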